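/- arXiv:1702.00802 — 8 statements merged into one kernel-verified Lean document; each statement's English description precedes it below -/
import Mathlib

section
/- Let t be an odd integer and let b be the smallest positive integer such that t ≢ ±1 (mod 2^b). Then t^2 ≡ 2^b + 1 (mod 2^(b+1)). -/
theorem tsq_mod_2pow (t : ℤ) (ht : Odd t) (b : ℕ)
    (hb : IsLeast {b : ℕ | 0 < b ∧
      ¬(t ≡ 1 [ZMOD (2 ^ b : ℤ)] ∨ t ≡ -1 [ZMOD (2 ^ b : ℤ)])} b) :
    t ^ 2 ≡ 2 ^ b + 1 [ZMOD (2 ^ (b + 1) : ℤ)] := by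
  obtain ⟨⟨hbpos, hbS⟩, hmin⟩ := hb
  obtain ⟨k, hk⟩ := ht
  have h3 : 3 ≤ b := by
    by_contra h
    push_neg at h
    interval_cases b
    · apply hbS
      left
      exact Int.modEq_iff_dvd.mpr ⟨-k, by push_cast; linarith⟩
    · rcases Int.even_or_odd k with ⟨j, hj⟩ | ⟨j, hj⟩
      · apply hbS
        left
        exact Int.modEq_iff_dvd.mpr ⟨-j, by push_cast; linarith⟩
      · apply hbS
        right
        exact Int.modEq_iff_dvd.mpr ⟨-j - 1, by push_cast; linarith⟩
  obtain ⟨c, rfl⟩ : ∃ c, b = c + 3 := ⟨b - 3, by omega⟩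
  have hprev : t ≡ 1 [ZMOD (2 ^ (c + 2) : ℤ)] ∨ t ≡ -1 [ZMOD (2 ^ (c + 2) : ℤ)] := by
    by_contra h
    have := hmin ⟨by omega, h⟩
    omega
  obtain ⟨ε, hε, hd⟩ : ∃ ε : ℤ, (ε = 1 ∨ ε = -1) ∧ (2 ^ (c + 2) : ℤ) ∣ t - ε := by
    rcases hprev with h | h
    · exact ⟨1, Or.inl rfl, Int.modEq_iff_dvd.mp h.symm⟩
    · exact ⟨-1, Or.inr rfl, Int.modEq_iff_dvd.mp h.symm⟩
  obtain ⟨m, hm⟩ := hd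
  have hmodd : Odd m := by
    rcases Int.even_or_odd m with ⟨j, hj⟩ | ho
    · exfalso
      apply hbS
      rcases hε with rfl | rfl
      · left
        exact Int.modEq_iff_dvd.mpr ⟨-j, by subst hj; ring_nf; ring_nf at hm; linarith⟩
      · right
        exact Int.modEq_iff_dvd.mpr ⟨-j, by subst hj; ring_nf; ring_nf at hm; linarith⟩
    · exact ho
  obtain ⟨j, hj⟩ := hmodd
  have ht' : t = ε + 2 ^ (c + 2) * m := by linarith
  subst hj
  subst ht'
  rcases hε with rfl | rfl
  · exact Int.modEq_iff_dvd.mpr ⟨-j - 2 ^ c * (2 * j + 1) ^ 2, by ring⟩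
  · exact Int.modEq_iff_dvd.mpr ⟨j + 1 - 2 ^ c * (2 * j + 1) ^ 2, by ring⟩
end

section
/- Let t be an odd integer and let b be the smallest positive integer such that t ≢ ±1 (mod 2^b). Then for all integers k ≥ 1, t^(2^k) ≡ 2^(k+b-1) + 1 (mod 2^(k+b)). -/
theorem tpow_mod_2pow (t : ℤ) (ht : Odd t) (b : ℕ)
    (hb : IsLeast {b : ℕ | 0 < b ∧
      ¬(t ≡ 1 [ZMOD (2 ^ b : ℤ)] ∨ t ≡ -1 [ZMOD (2 ^ b : ℤ)])} b) :
    ∀ k : ℕ, 1 ≤ k →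
      t ^ (2 ^ k) ≡ 2 ^ (k + b - 1) + 1 [ZMOD (2 ^ (k + b) : ℤ)] := by
  obtain ⟨⟨hbpos, hbne⟩, hmin⟩ := hb
  obtain ⟨m, hm⟩ := ht
  have hb3 : 3 ≤ b := by
    by_contra h
    push_neg at h
    interval_cases b
    · exact hbne (Or.inl (by rw [Int.modEq_iff_dvd]; norm_num; omega))
    · apply hbne
      have : (4:ℤ) ∣ 1 - t ∨ (4:ℤ) ∣ -1 - t := by omega
      rcases this with h4 | h4
      · exact Or.inl (by rw [Int.modEq_iff_dvd]; norm_num; exact h4)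
      · exact Or.inr (by rw [Int.modEq_iff_dvd]; norm_num; exact h4)
  have h2b : (2:ℤ)^b = 2^(b-1) * 2 := by rw [← pow_succ]; congr 1; omega
  have hprev : t ≡ 1 [ZMOD (2^(b-1) : ℤ)] ∨ t ≡ -1 [ZMOD (2^(b-1) : ℤ)] := by
    by_contra h
    have := hmin ⟨by omega, h⟩
    omega
  -- extract t = e + 2^(b-1)*s with s odd
  obtain ⟨e, s, he, hts, hsodd⟩ : ∃ (e s : ℤ), (e = 1 ∨ e = -1) ∧
      t = e + 2^(b-1) * s ∧ Odd s := by
    rcases hprev with h1 | h1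
    · rw [Int.modEq_iff_dvd] at h1
      obtain ⟨c, hc⟩ := h1
      refine ⟨1, -c, Or.inl rfl, by linarith, ?_⟩
      rcases Int.even_or_odd c with ⟨d, hd⟩ | hodd
      · exact absurd (Or.inl (by rw [Int.modEq_iff_dvd]; exact ⟨d, by rw [hc, hd, h2b]; ring⟩)) hbne
      · simpa using hodd.neg
    · rw [Int.modEq_iff_dvd] at h1
      obtain ⟨c, hc⟩ := h1
      refine ⟨-1, -c, Or.inr rfl, by linarith, ?_⟩
      rcases Int.even_or_odd c with ⟨d, hd⟩ | hodd
      · exact absurd (Or.inr (by rw [Int.modEq_iff_dvd]; exact ⟨d, by rw [hc, hd, h2b]; ring⟩)) hbne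
      · simpa using hodd.neg
  -- key induction
  have key : ∀ k : ℕ, 1 ≤ k → ∃ u : ℤ, Odd u ∧ t ^ (2^k) = 1 + 2^(k + b - 1) * u := by
    intro k hk
    induction k with
    | zero => omega
    | succ n ih =>
      rcases Nat.lt_or_ge n 1 with h1 | h1
      · -- n = 0 : base case k = 1
        have hn0 : n = 0 := by omega
        subst hn0
        refine ⟨e * s + 2^(b-2) * s^2, ?_, ?_⟩
        · have heven : Even ((2:ℤ)^(b-2) * s^2) := by
            refine ⟨2^(b-3) * s^2, ?_⟩
            rw [show b - 2 = (b-3) + 1 from by omega, pow_succ]; ring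
          have hodd : Odd (e * s) := by
            rcases he with rfl | rfl
            · simpa using hsodd
            · simpa using hsodd.neg
          exact hodd.add_even heven
        · have he2 : e^2 = 1 := by rcases he with rfl | rfl <;> norm_num
          rw [hts]
          have h1' : b - 1 = (b-3) + 2 := by omega
          have h2' : 0 + 1 + b - 1 = (b-3) + 3 := by omega
          have h3' : b - 2 = (b-3) + 1 := by omega
          rw [h1', h2', h3']
          have : (e + 2 ^ (b - 3 + 2) * s) ^ 2 ^ 1 =
              e^2 + 2 ^ (b - 3 + 3) * (e * s + 2 ^ (b - 3 + 1) * s ^ 2) := by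
            simp only [pow_succ, pow_zero, pow_add]
            ring
          rw [this, he2]
      · obtain ⟨u, hu, heq⟩ := ih h1
        have he1 : n + b - 1 = (n + b - 3) + 2 := by omega
        have he2 : n + 1 + b - 1 = (n + b - 3) + 3 := by omega
        refine ⟨u + 2^(n + b - 2) * u^2, ?_, ?_⟩
        · refine hu.add_even ⟨2^(n + b - 3) * u^2, ?_⟩
          rw [show n + b - 2 = (n + b - 3) + 1 from by omega, pow_succ]; ring
        · have hsq : t ^ 2 ^ (n+1) = (t ^ 2 ^ n)^2 := by
            rw [← pow_mul, pow_succ]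
          rw [hsq, heq, he1, he2, show n + b - 2 = (n + b - 3) + 1 from by omega]
          simp only [pow_succ, pow_add]
          ring
  intro k hk
  obtain ⟨u, ⟨v, hv⟩, heq⟩ := key k hk
  rw [Int.modEq_iff_dvd, heq]
  refine ⟨-v, ?_⟩
  have h2 : (2:ℤ)^(k+b) = 2^(k+b-1) * 2 := by rw [← pow_succ]; congr 1; omega
  rw [hv, h2]
  ring
end

section
/- Let t be an odd integer and let b be the smallest positive integer such that t ≢ ±1 (mod 2^b). Then for all k ≥ 1, (t^2)^(2^(k-1)) ≢ 1 (mod 2^(k+b)). -/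
theorem tsq_pow_not_one (t : ℤ) (ht : Odd t) (b : ℕ)
    (hb : IsLeast {b : ℕ | 0 < b ∧
      ¬(t ≡ 1 [ZMOD (2 ^ b : ℤ)] ∨ t ≡ -1 [ZMOD (2 ^ b : ℤ)])} b) :
    ∀ k : ℕ, 1 ≤ k →
      ¬((t ^ 2) ^ (2 ^ (k - 1)) ≡ 1 [ZMOD (2 ^ (k + b) : ℤ)]) := by
  obtain ⟨⟨hbpos, hbne⟩, hble⟩ := hb
  obtain ⟨m, hm⟩ := ht
  -- b ≥ 3
  have hb3 : 3 ≤ b := by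
    by_contra h
    push_neg at h
    interval_cases b
    · exact hbne (Or.inl (Int.modEq_iff_dvd.mpr (by norm_num; omega)))
    · refine hbne ?_
      rcases Int.even_or_odd m with ⟨w, hw⟩ | ⟨w, hw⟩
      · exact Or.inl (Int.modEq_iff_dvd.mpr (by norm_num; omega))
      · exact Or.inr (Int.modEq_iff_dvd.mpr (by norm_num; omega))
  obtain ⟨B, rfl⟩ : ∃ B, b = B + 3 := ⟨b - 3, by omega⟩
  -- t ≡ ±1 mod 2^(B+2)
  have hsub : t ≡ 1 [ZMOD (2 ^ (B + 2) : ℤ)] ∨ t ≡ -1 [ZMOD (2 ^ (B + 2) : ℤ)] := by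
    by_contra h
    have := hble ⟨by omega, h⟩
    omega
  obtain ⟨ε, hε, u, hu, huodd⟩ :
      ∃ ε : ℤ, (ε = 1 ∨ ε = -1) ∧ ∃ u : ℤ, t = ε + 2 ^ (B + 2) * u ∧ Odd u := by
    rcases hsub with h | h
    · obtain ⟨u, hu⟩ := (Int.modEq_iff_dvd.mp h.symm)
      refine ⟨1, Or.inl rfl, u, by linarith, ?_⟩
      rcases Int.even_or_odd u with ⟨w, hw⟩ | hodd
      · exfalso
        refine hbne (Or.inl (Int.modEq_iff_dvd.mpr ⟨-w, ?_⟩))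
        subst hw
        have : (2:ℤ) ^ (B + 3) = 2 ^ (B + 2) * 2 := by ring
        rw [this]; linarith [hu]
      · exact hodd
    · obtain ⟨u, hu⟩ := (Int.modEq_iff_dvd.mp h.symm)
      refine ⟨-1, Or.inr rfl, u, by linarith, ?_⟩
      rcases Int.even_or_odd u with ⟨w, hw⟩ | hodd
      · exfalso
        refine hbne (Or.inr (Int.modEq_iff_dvd.mpr ⟨-w, ?_⟩))
        subst hw
        have : (2:ℤ) ^ (B + 3) = 2 ^ (B + 2) * 2 := by ring
        rw [this]; linarith [hu]
      · exact hodd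
  -- t² = 1 + 2^(B+3)·v with v odd
  set v : ℤ := ε * u + 2 ^ (B + 1) * u ^ 2 with hv
  have ht2 : t ^ 2 = 1 + 2 ^ (B + 3) * v := by
    have hε2 : ε ^ 2 = 1 := by rcases hε with rfl | rfl <;> norm_num
    rw [hu, hv]
    have : (ε + 2 ^ (B + 2) * u) ^ 2 =
        ε ^ 2 + 2 ^ (B + 3) * (ε * u + 2 ^ (B + 1) * u ^ 2) := by ring
    rw [this, hε2]
  have hvodd : Odd v := by
    have h1 : Odd (ε * u) := by
      rcases hε with rfl | rfl
      · simpa using huodd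
      · simpa using huodd.neg
    exact h1.add_even ((Int.even_pow.mpr ⟨even_two, by omega⟩).mul_right _)
  -- key induction
  have key : ∀ k : ℕ, ∃ w : ℤ, Odd w ∧ (t ^ 2) ^ (2 ^ k) = 1 + 2 ^ (k + (B + 3)) * w := by
    intro k
    induction k with
    | zero => exact ⟨v, hvodd, by simpa using ht2⟩
    | succ k ih =>
      obtain ⟨w, hw, hx⟩ := ih
      refine ⟨w + 2 ^ (k + B + 2) * w ^ 2,
        hw.add_even ((Int.even_pow.mpr ⟨even_two, by omega⟩).mul_right _), ?_⟩
      have h2 : (t ^ 2) ^ (2 ^ (k + 1)) = ((t ^ 2) ^ (2 ^ k)) ^ 2 := by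
        rw [pow_succ 2 k, pow_mul]
      rw [h2, hx]
      ring
  -- conclude
  intro k hk h
  obtain ⟨K, rfl⟩ : ∃ K, k = K + 1 := ⟨k - 1, by omega⟩
  obtain ⟨w, hw, hx⟩ := key K
  simp only [Nat.add_sub_cancel] at h
  obtain ⟨c, hc⟩ := Int.modEq_iff_dvd.mp h
  rw [hx] at hc
  have hexp : K + 1 + (B + 3) = (K + (B + 3)) + 1 := by omega
  rw [hexp] at hc
  have hdvd : (2:ℤ) ∣ w := by
    have h2 : (2:ℤ) ^ (K + (B + 3)) * w = 2 ^ (K + (B + 3)) * (2 * (-c)) := by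
      rw [pow_succ] at hc; linarith
    have := mul_left_cancel₀ (a := (2:ℤ) ^ (K + (B + 3))) (by positivity) h2
    exact ⟨-c, this⟩
  obtain ⟨c2, hc2⟩ := hdvd
  obtain ⟨j, hj⟩ := hw
  omega
end

section
/- Let t be an odd integer and let b be the smallest positive integer such that t ≢ ±1 (mod 2^b). Then for all k ≥ 1, the multiplicative order of t^2 modulo 2^(k+b) is exactly 2^k. -/
lemma key_pow (c : ℕ) (v : ℤ) (hv : Odd v) :
    ∀ j : ℕ, ∃ w : ℤ, Odd w ∧ (1 + 2 ^ (c + 2) * v) ^ (2 ^ j) = 1 + 2 ^ (c + 2 + j) * w := by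
  intro j
  induction j with
  | zero => exact ⟨v, hv, by ring⟩
  | succ j ih =>
    obtain ⟨w, hw, hEq⟩ := ih
    refine ⟨w + 2 ^ (c + 1 + j) * w ^ 2, ?_, ?_⟩
    · obtain ⟨m, hm⟩ := hw
      exact ⟨m + 2 ^ (c + j) * w ^ 2, by rw [hm]; ring⟩
    · rw [pow_succ (2 : ℕ) j, pow_mul, hEq]; ring

theorem tsq_order (t : ℤ) (ht : Odd t) (b : ℕ)
    (hb : IsLeast {b : ℕ | 0 < b ∧
      ¬(t ≡ 1 [ZMOD (2 ^ b : ℤ)] ∨ t ≡ -1 [ZMOD (2 ^ b : ℤ)])} b) :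
    ∀ k : ℕ, 1 ≤ k →
      orderOf ((t : ZMod (2 ^ (k + b))) ^ 2) = 2 ^ k := by
  obtain ⟨m, hm⟩ := ht
  obtain ⟨⟨hbpos, hbne⟩, hmin⟩ := hb
  -- b ≥ 3
  have hb3 : 3 ≤ b := by
    by_contra h
    interval_cases b
    · exact hbne (Or.inl (Int.modEq_iff_dvd.mpr ⟨-m, by omega⟩))
    · rcases Int.even_or_odd m with ⟨q, hq⟩ | ⟨q, hq⟩
      · exact hbne (Or.inl (Int.modEq_iff_dvd.mpr ⟨-q, by omega⟩))
      · exact hbne (Or.inr (Int.modEq_iff_dvd.mpr ⟨-q - 1, by omega⟩))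
  obtain ⟨c, rfl⟩ : ∃ c, b = c + 3 := ⟨b - 3, by omega⟩
  -- t ≡ ε mod 2^(b-1)
  have hprev : t ≡ 1 [ZMOD (2 ^ (c + 2) : ℤ)] ∨ t ≡ -1 [ZMOD (2 ^ (c + 2) : ℤ)] := by
    by_contra h
    exact absurd (hmin ⟨by omega, h⟩) (by omega)
  have heven : Even ((2 : ℤ) ^ (c + 1)) := ⟨2 ^ c, by ring⟩
  -- t^2 = 1 + 2^(c+3) * v with v odd
  have hv : ∃ v : ℤ, Odd v ∧ t ^ 2 = 1 + 2 ^ (c + 3) * v := by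
    rcases hprev with h | h
    · obtain ⟨u, hu⟩ := Int.modEq_iff_dvd.mp h
      have hu_odd : Odd u := by
        rcases Int.even_or_odd u with ⟨q, hq⟩ | h'
        · exact absurd (Or.inl (Int.modEq_iff_dvd.mpr ⟨q, by rw [hu, hq]; ring⟩)) hbne
        · exact h'
      refine ⟨u * (2 ^ (c + 1) * u - 1), Odd.mul hu_odd ?_, ?_⟩
      · exact (Even.mul_right heven u).sub_odd odd_one
      · have ht1 : t = 1 - 2 ^ (c + 2) * u := by omega
        rw [ht1]; ring
    · obtain ⟨u, hu⟩ := Int.modEq_iff_dvd.mp h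
      have hu_odd : Odd u := by
        rcases Int.even_or_odd u with ⟨q, hq⟩ | h'
        · exact absurd (Or.inr (Int.modEq_iff_dvd.mpr ⟨q, by rw [hu, hq]; ring⟩)) hbne
        · exact h'
      refine ⟨u * (2 ^ (c + 1) * u + 1), Odd.mul hu_odd ?_, ?_⟩
      · exact (Even.mul_right heven u).add_odd odd_one
      · have ht1 : t = -1 - 2 ^ (c + 2) * u := by omega
        rw [ht1]; ring
  obtain ⟨v, hv_odd, htv⟩ := hv
  intro k hk
  obtain ⟨n, rfl⟩ : ∃ n, k = n + 1 := ⟨k - 1, by omega⟩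
  set N : ℕ := 2 ^ (n + 1 + (c + 3)) with hN
  haveI : Fact (Nat.Prime 2) := ⟨Nat.prime_two⟩
  have hNeq : ∀ j : ℕ, (N : ℤ) = 2 ^ (n + 1 + (c + 3)) := by
    intro j; rw [hN]; push_cast; ring
  have hcast : ∀ j : ℕ, ∃ w : ℤ, Odd w ∧
      ((t : ZMod N) ^ 2) ^ (2 ^ j) = 1 + ((2 ^ (c + 3 + j) * w : ℤ) : ZMod N) := by
    intro j
    obtain ⟨w, hw, hEq⟩ := key_pow (c + 1) v hv_odd j
    refine ⟨w, hw, ?_⟩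
    have hZ : ((t ^ 2) ^ (2 ^ j) : ℤ) = 1 + 2 ^ (c + 3 + j) * w := by
      rw [htv]
      have h3 : c + 1 + 2 = c + 3 := by omega
      rw [← h3] at hEq ⊢
      exact hEq
    calc ((t : ZMod N) ^ 2) ^ (2 ^ j) = (((t ^ 2) ^ (2 ^ j) : ℤ) : ZMod N) := by push_cast; ring
      _ = 1 + ((2 ^ (c + 3 + j) * w : ℤ) : ZMod N) := by rw [hZ]; push_cast; ring
  have hfin : ((t : ZMod N) ^ 2) ^ (2 ^ (n + 1)) = 1 := by
    obtain ⟨w, hw, hEq⟩ := hcast (n + 1)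
    rw [hEq]
    have h0 : ((2 ^ (c + 3 + (n + 1)) * w : ℤ) : ZMod N) = 0 := by
      rw [ZMod.intCast_zmod_eq_zero_iff_dvd]
      refine Dvd.dvd.mul_right ?_ w
      rw [hNeq 0]
      exact pow_dvd_pow 2 (by omega)
    rw [h0, add_zero]
  have hnot : ((t : ZMod N) ^ 2) ^ (2 ^ n) ≠ 1 := by
    obtain ⟨w, hw, hEq⟩ := hcast n
    rw [hEq]
    intro hcontra
    have h0 : ((2 ^ (c + 3 + n) * w : ℤ) : ZMod N) = 0 := by
      rwa [add_eq_left] at hcontra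
    rw [ZMod.intCast_zmod_eq_zero_iff_dvd] at h0
    have hNdvd : (2 : ℤ) ^ (c + 3 + n) * 2 ∣ 2 ^ (c + 3 + n) * w := by
      have hh : ((N : ℤ)) = 2 ^ (c + 3 + n) * 2 := by
        rw [hNeq 0, ← pow_succ]; ring_nf
      rwa [hh] at h0
    have h2w : (2 : ℤ) ∣ w :=
      (mul_dvd_mul_iff_left (by positivity : (2:ℤ) ^ (c + 3 + n) ≠ 0)).mp hNdvd
    rw [Int.not_even_iff_odd.symm] at hw
    exact hw (even_iff_two_dvd.mpr h2w)
  exact orderOf_eq_prime_pow hnot hfin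
end

section
/- Let t be an odd integer and let b be the smallest positive integer such that t ≢ ±1 (mod 2^b). Then for every k ≥ 1 and every i ≥ 0, the 2^k integers (t^2)^i, (t^2)^(i+1), ..., (t^2)^(i+2^k-1) are pairwise incongruent modulo 2^(k+b). -/
/-- Powers of `1 + 2^c * v` stay of the form `1 + 2^c * w`, with the parity of
`w` matching the parity of the exponent. -/
lemma tsq_aux_pow (c : ℕ) (hc : 1 ≤ c) (v : ℤ) (hv : Odd v) (n : ℕ) :
    ∃ w : ℤ, (1 + 2 ^ c * v) ^ n = 1 + 2 ^ c * w ∧ (Odd w ↔ Odd n) := by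
  induction n with
  | zero => exact ⟨0, by ring, by simp⟩
  | succ n ih =>
    obtain ⟨w, hw, hpar⟩ := ih
    refine ⟨w + v + 2 ^ c * (w * v), ?_, ?_⟩
    · rw [pow_succ, hw]; ring
    · have h2 : (2 : ℤ) ∣ 2 ^ c * (w * v) :=
        Dvd.dvd.mul_right (dvd_pow_self 2 (by omega)) _
      obtain ⟨e, he⟩ := h2
      rw [he]
      rcases hv with ⟨m, hm⟩
      rw [Int.odd_iff] at hpar ⊢
      rw [Nat.odd_iff] at hpar ⊢
      omega

/-- Squaring step: `(1 + 2^c v)^2 = 1 + 2^(c+1) v'` with `v'` odd, for `c ≥ 2`. -/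
lemma tsq_aux_sq (c : ℕ) (hc : 2 ≤ c) (v : ℤ) (hv : Odd v) :
    ∃ v' : ℤ, Odd v' ∧ (1 + 2 ^ c * v) ^ 2 = 1 + 2 ^ (c + 1) * v' := by
  obtain ⟨c', rfl⟩ := Nat.exists_eq_add_of_le hc
  refine ⟨v + 2 ^ (c' + 1) * v ^ 2, ?_, ?_⟩
  · rcases hv with ⟨m, hm⟩
    have h2 : (2 : ℤ) ∣ 2 ^ (c' + 1) * v ^ 2 :=
      Dvd.dvd.mul_right (dvd_pow_self 2 (by omega)) _
    obtain ⟨e, he⟩ := h2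
    rw [Int.odd_iff] at *
    omega
  · ring_nf

theorem tsq_powers_incongruent (t : ℤ) (ht : Odd t) (b : ℕ)
    (hb : IsLeast {b : ℕ | 0 < b ∧
      ¬(t ≡ 1 [ZMOD (2 ^ b : ℤ)] ∨ t ≡ -1 [ZMOD (2 ^ b : ℤ)])} b) :
    ∀ k : ℕ, 1 ≤ k → ∀ i : ℕ, ∀ r s : ℕ, r < 2 ^ k → s < 2 ^ k → r ≠ s →
      ¬((t ^ 2) ^ (i + r) ≡ (t ^ 2) ^ (i + s) [ZMOD (2 ^ (k + b) : ℤ)]) := by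
  obtain ⟨⟨hb0, hbne⟩, hmin⟩ := hb
  obtain ⟨m, hm⟩ := ht
  -- b ≥ 3
  have hb1 : b ≠ 1 := by
    rintro rfl
    exact hbne (Or.inl (Int.modEq_iff_dvd.2 ⟨-m, by omega⟩))
  have hb2 : b ≠ 2 := by
    rintro rfl
    rcases Int.even_or_odd m with ⟨m', hm'⟩ | ⟨m', hm'⟩
    · exact hbne (Or.inl (Int.modEq_iff_dvd.2 ⟨-m', by omega⟩))
    · exact hbne (Or.inr (Int.modEq_iff_dvd.2 ⟨-(m' + 1), by push_cast; omega⟩))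
  have hb3 : 3 ≤ b := by omega
  -- t ≡ ±1 mod 2^(b-1)
  have hnotmem : (b - 1) ∉ {b : ℕ | 0 < b ∧
      ¬(t ≡ 1 [ZMOD (2 ^ b : ℤ)] ∨ t ≡ -1 [ZMOD (2 ^ b : ℤ)])} := by
    intro hmem
    have := hmin hmem
    omega
  simp only [Set.mem_setOf_eq, not_and, not_not] at hnotmem
  have hcong := hnotmem (by omega)
  obtain ⟨b', rfl⟩ := Nat.exists_eq_add_of_le hb3
  have hb1' : 3 + b' - 1 = b' + 2 := by omega
  rw [hb1'] at hcong
  -- get t = ε + 2^(b'+2) * u with ε = ±1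
  obtain ⟨ε, hε, u', hu'⟩ : ∃ ε : ℤ, (ε = 1 ∨ ε = -1) ∧
      ∃ u' : ℤ, ε - t = 2 ^ (b' + 2) * u' := by
    rcases hcong with h | h
    · exact ⟨1, Or.inl rfl, Int.modEq_iff_dvd.1 h⟩
    · exact ⟨-1, Or.inr rfl, Int.modEq_iff_dvd.1 h⟩
  set u : ℤ := -u' with hu_def
  have ht_eq : t = ε + 2 ^ (b' + 2) * u := by rw [hu_def]; linarith [hu']
  -- u is odd
  have hu_odd : Odd u := by
    rcases Int.even_or_odd u with ⟨u'', hu''⟩ | h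
    · exfalso
      apply hbne
      have hd : (2 : ℤ) ^ (3 + b') ∣ ε - t := by
        refine ⟨-u'', ?_⟩
        rw [ht_eq, hu'', show (3 + b') = (b' + 2) + 1 by omega, pow_succ]
        ring
      rcases hε with rfl | rfl
      · exact Or.inl (Int.modEq_iff_dvd.2 hd)
      · exact Or.inr (Int.modEq_iff_dvd.2 hd)
    · exact h
  -- t^2 = 1 + 2^(3+b') * v with v odd
  have hε2 : ε ^ 2 = 1 := by rcases hε with rfl | rfl <;> ring
  have htsq : t ^ 2 = 1 + 2 ^ (3 + b') * (ε * u + 2 ^ (b' + 1) * u ^ 2) := by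
    rw [ht_eq]
    have : ((2:ℤ) ^ (b' + 2)) ^ 2 = 2 ^ (3 + b') * 2 ^ (b' + 1) := by
      rw [← pow_mul, ← pow_add]; ring_nf
    linear_combination hε2 + u ^ 2 * this
  have hv_odd : Odd (ε * u + 2 ^ (b' + 1) * u ^ 2) := by
    have h2 : (2 : ℤ) ∣ 2 ^ (b' + 1) * u ^ 2 :=
      Dvd.dvd.mul_right (dvd_pow_self 2 (by omega)) _
    obtain ⟨e, he⟩ := h2
    have hεu : Odd (ε * u) := by
      rcases hε with rfl | rfl
      · simpa using hu_odd
      · simpa using hu_odd.neg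
    rcases hεu with ⟨w, hw⟩
    rw [Int.odd_iff] at *
    omega
  set B := 3 + b' with hB
  -- valuation of (t^2)^(2^j)
  have hval : ∀ j : ℕ, ∃ v : ℤ, Odd v ∧ (t ^ 2) ^ (2 ^ j) = 1 + 2 ^ (B + j) * v := by
    intro j
    induction j with
    | zero => refine ⟨_, hv_odd, ?_⟩; simpa using htsq
    | succ j ih =>
      obtain ⟨v, hvodd, hveq⟩ := ih
      obtain ⟨v', hv'odd, hv'eq⟩ := tsq_aux_sq (B + j) (by omega) v hvodd
      refine ⟨v', hv'odd, ?_⟩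
      rw [show 2 ^ (j + 1) = 2 ^ j * 2 by rw [pow_succ], pow_mul, hveq, hv'eq,
        show B + (j + 1) = B + j + 1 by omega]
  -- key: (t^2)^d ≢ 1 mod 2^(k+B) for 0 < d < 2^k
  have hkey : ∀ k : ℕ, ∀ d : ℕ, 0 < d → d < 2 ^ k →
      ¬((2 : ℤ) ^ (k + B) ∣ (t ^ 2) ^ d - 1) := by
    intro k d hd0 hdk hdvd
    obtain ⟨j, m', hm'odd, rfl⟩ := Nat.exists_eq_two_pow_mul_odd hd0.ne'
    have hjk : j < k := by
      by_contra hjk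
      have h1 : 2 ^ k ≤ 2 ^ j := Nat.pow_le_pow_right (by omega) (not_lt.1 hjk)
      have h2 : 2 ^ j ≤ 2 ^ j * m' := Nat.le_mul_of_pos_right (2 ^ j) hm'odd.pos
      exact absurd hdk (not_lt.2 (h1.trans h2))
    obtain ⟨v, hvodd, hveq⟩ := hval j
    obtain ⟨w, hweq, hwpar⟩ := tsq_aux_pow (B + j) (by omega) v hvodd m'
    have heq : (t ^ 2) ^ (2 ^ j * m') = 1 + 2 ^ (B + j) * w := by
      rw [pow_mul, hveq, hweq]
    rw [heq] at hdvd
    have hsimp : (1 : ℤ) + 2 ^ (B + j) * w - 1 = 2 ^ (B + j) * w := by ring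
    rw [hsimp] at hdvd
    have hdvd2 : (2 : ℤ) ^ (B + j) * 2 ∣ 2 ^ (B + j) * w := by
      rw [← pow_succ]
      exact dvd_trans (pow_dvd_pow 2 (by omega)) hdvd
    have h2w : (2 : ℤ) ∣ w :=
      (mul_dvd_mul_iff_left (by positivity : ((2:ℤ) ^ (B + j)) ≠ 0)).1 hdvd2
    obtain ⟨p, hp⟩ := hwpar.2 hm'odd
    obtain ⟨e, he⟩ := h2w
    omega
  -- coprimality of t^2 powers with 2
  have hcop : ∀ n : ℕ, IsCoprime ((2 : ℤ) ^ (n)) t := by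
    intro n
    have h2t : IsCoprime (2 : ℤ) t := ⟨-m, 1, by rw [hm]; ring⟩
    exact h2t.pow_left
  -- main argument
  have hmain : ∀ k : ℕ, 1 ≤ k → ∀ i r s : ℕ, r < s → s < 2 ^ k →
      ¬((t ^ 2) ^ (i + r) ≡ (t ^ 2) ^ (i + s) [ZMOD (2 ^ (k + B) : ℤ)]) := by
    intro k hk i r s hrs hs hcong2
    have hdvd : (2 : ℤ) ^ (k + B) ∣ (t ^ 2) ^ (i + s) - (t ^ 2) ^ (i + r) :=
      hcong2.dvd
    have hfac : (t ^ 2) ^ (i + s) - (t ^ 2) ^ (i + r) =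
        ((t ^ 2) ^ (s - r) - 1) * (t ^ 2) ^ (i + r) := by
      rw [show i + s = (s - r) + (i + r) by omega, pow_add]
      ring
    rw [hfac] at hdvd
    have hcop2 : IsCoprime ((2 : ℤ) ^ (k + B)) ((t ^ 2) ^ (i + r)) := by
      have := (hcop (k + B)).pow_right (n := 2 * (i + r))
      rwa [pow_mul] at this
    have := hcop2.dvd_of_dvd_mul_right hdvd
    exact hkey k (s - r) (by omega) (by omega) this
  intro k hk i r s hr hs hrs hcong2
  rcases lt_or_gt_of_ne hrs with h | h
  · exact hmain k hk i r s h hs hcong2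
  · exact hmain k hk i s r h hr hcong2.symm
end

section
/- Let t be an odd integer and let b be the smallest positive integer such that t ≢ ±1 (mod 2^b). For every k ≥ 0 and every i ≥ 0, the 2^k integers ((t^2)^(i+r) - 1)/2^b for r = 0, 1, ..., 2^k - 1 are pairwise incongruent modulo 2^k. -/
/-- Squaring step: if `q = 1 + 2^c * m` with `m` odd and `c ≥ 2`, then
`q^2 = 1 + 2^(c+1) * m'` with `m'` odd. -/
lemma aux_sq_step (c : ℕ) (hc : 2 ≤ c) (m : ℤ) (hm : Odd m) :
    ∃ m' : ℤ, Odd m' ∧ (1 + 2 ^ c * m) ^ 2 = 1 + 2 ^ (c + 1) * m' := by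
  obtain ⟨c', rfl⟩ : ∃ c', c = c' + 2 := ⟨c - 2, by omega⟩
  refine ⟨m + 2 ^ (c' + 1) * m ^ 2, ?_, by ring⟩
  exact hm.add_even (Even.mul_right ⟨2 ^ c' * 1, by ring⟩ _)

lemma aux_pow_two_pow (b : ℕ) (hb : 2 ≤ b) (m : ℤ) (hm : Odd m) :
    ∀ v : ℕ, ∃ m' : ℤ, Odd m' ∧ (1 + 2 ^ b * m) ^ 2 ^ v = 1 + 2 ^ (b + v) * m' := by
  intro v
  induction v with
  | zero => exact ⟨m, hm, by simp⟩
  | succ v ih =>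
    obtain ⟨m', hm', h'⟩ := ih
    obtain ⟨m'', hm'', h''⟩ := aux_sq_step (b + v) (by omega) m' hm'
    refine ⟨m'', hm'', ?_⟩
    rw [pow_succ, pow_mul, h', h'', ← add_assoc]

lemma aux_odd_pow (c : ℕ) (hc : 1 ≤ c) (M : ℤ) (hM : Odd M) (e : ℕ) (he : Odd e) :
    ∃ M' : ℤ, Odd M' ∧ (1 + 2 ^ c * M) ^ e = 1 + 2 ^ c * M' := by
  set Q : ℤ := 1 + 2 ^ c * M with hQ
  have hev : Even ((2 : ℤ) ^ c * M) :=
    Even.mul_right ⟨2 ^ (c - 1), by rw [← two_mul, ← pow_succ']; congr 1; omega⟩ M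
  have hQodd : Odd Q := by rw [hQ, add_comm]; exact hev.add_odd odd_one
  set S : ℤ := ∑ j ∈ Finset.range e, Q ^ j with hS
  have hgeo : Q ^ e - 1 = 2 ^ c * (M * S) := by
    have h := geom_sum_mul Q e
    have hQ1 : Q - 1 = 2 ^ c * M := by rw [hQ]; ring
    rw [← hS, hQ1] at h
    linarith [h]
  have hSodd : Odd S := by
    rw [← Int.not_even_iff_odd, even_iff_two_dvd,
      show ((2 : ℤ)) = ((2 : ℕ) : ℤ) from by norm_num,
      ← ZMod.intCast_zmod_eq_zero_iff_dvd]
    have hcast : ((S : ℤ) : ZMod 2) = (e : ZMod 2) := by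
      rw [hS]
      push_cast
      have hQ1 : ((Q : ℤ) : ZMod 2) = 1 := by
        obtain ⟨n, hn⟩ := hQodd
        rw [hn]; push_cast
        rw [show ((2 : ZMod 2)) = 0 from by decide]; ring
      simp [hQ1]
    rw [hcast]
    have he1 : (e : ZMod 2) = 1 := by
      obtain ⟨j, hj⟩ := he
      subst hj; push_cast
      rw [show ((2 : ZMod 2)) = 0 from by decide]; ring
    rw [he1]; decide
  exact ⟨M * S, hM.mul hSodd, by linarith [hgeo]⟩

/-- Exact 2-adic valuation: if `q = 1 + 2^b m`, `m` odd, `b ≥ 2`, `d = 2^v * e` with `e` odd,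
then `q^d - 1 = 2^(b+v) * M` with `M` odd. -/
lemma aux_val (b : ℕ) (hb : 2 ≤ b) (m : ℤ) (hm : Odd m) (v e : ℕ) (he : Odd e) :
    ∃ M : ℤ, Odd M ∧ (1 + 2 ^ b * m) ^ (2 ^ v * e) - 1 = 2 ^ (b + v) * M := by
  obtain ⟨m', hm', h'⟩ := aux_pow_two_pow b hb m hm v
  obtain ⟨M', hM', h''⟩ := aux_odd_pow (b + v) (by omega) m' hm' e he
  refine ⟨M', hM', ?_⟩
  rw [pow_mul, h', h'']
  ring

/-- Main incongruence argument, asymmetric version (r < s). -/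
lemma aux_main (b : ℕ) (hb : 2 ≤ b) (m : ℤ) (hm : Odd m) (q : ℤ)
    (hq : q = 1 + 2 ^ b * m) (k i r s : ℕ) (hrs : r < s) (hd : s - r < 2 ^ k) :
    ¬((q ^ (i + r) - 1) / 2 ^ b ≡ (q ^ (i + s) - 1) / 2 ^ b [ZMOD (2 ^ k : ℤ)]) := by
  intro hmod
  have hqodd : Odd q := by
    rw [hq, add_comm]
    exact (Even.mul_right ⟨2 ^ (b - 1), by rw [← two_mul, ← pow_succ']; congr 1; omega⟩ m).add_odd
      odd_one
  have h2b : (2 : ℤ) ^ b ≠ 0 := pow_ne_zero _ two_ne_zero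
  -- q^n ≡ 1 mod 2^b
  have hdvd : ∀ n : ℕ, ∃ A : ℤ, q ^ n - 1 = 2 ^ b * A := by
    intro n
    have h1 : q ≡ 1 [ZMOD (2 ^ b : ℤ)] := by
      rw [Int.modEq_iff_dvd]
      exact ⟨-m, by rw [hq]; ring⟩
    have h2 : q ^ n ≡ 1 [ZMOD (2 ^ b : ℤ)] := by
      simpa using h1.pow n
    obtain ⟨A, hA⟩ := (Int.ModEq.dvd h2)
    exact ⟨-A, by linarith [hA]⟩
  obtain ⟨A, hA⟩ := hdvd (i + r)
  obtain ⟨B, hB⟩ := hdvd (i + s)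
  rw [hA, hB, Int.mul_ediv_cancel_left _ h2b, Int.mul_ediv_cancel_left _ h2b] at hmod
  have hdvd1 : (2 : ℤ) ^ (b + k) ∣ q ^ (i + s) - q ^ (i + r) := by
    obtain ⟨C, hC⟩ := hmod.dvd
    refine ⟨C, ?_⟩
    have : q ^ (i + s) - q ^ (i + r) = 2 ^ b * (B - A) := by
      rw [show (2:ℤ) ^ b * (B - A) = 2 ^ b * B - 2 ^ b * A from by ring, ← hA, ← hB]; ring
    rw [this, hC, pow_add]; ring
  set d : ℕ := s - r with hddef
  have hd0 : d ≠ 0 := by omega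
  have hfact : q ^ (i + s) - q ^ (i + r) = q ^ (i + r) * (q ^ d - 1) := by
    rw [show i + s = (i + r) + d from by omega, pow_add]; ring
  have hcop : IsCoprime ((2 : ℤ) ^ (b + k)) (q ^ (i + r)) := by
    apply IsCoprime.pow
    obtain ⟨n, hn⟩ := hqodd
    exact ⟨-n, 1, by rw [hn]; ring⟩
  have hdvd2 : (2 : ℤ) ^ (b + k) ∣ q ^ d - 1 := by
    rw [hfact] at hdvd1
    exact hcop.dvd_of_dvd_mul_left hdvd1
  obtain ⟨v, e, hve, hde⟩ := Nat.exists_eq_pow_mul_and_not_dvd hd0 2 (by norm_num)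
  have he : Odd e := Nat.odd_iff.mpr (Nat.not_even_iff.mp (by rwa [even_iff_two_dvd]))
  have hvk : v < k := by
    have h1 : 2 ^ v ≤ d := by
      calc 2 ^ v ≤ 2 ^ v * e := Nat.le_mul_of_pos_right _ (by omega)
        _ = d := hde.symm
    have : 2 ^ v < 2 ^ k := lt_of_le_of_lt h1 hd
    exact (Nat.pow_lt_pow_iff_right (by norm_num)).mp this
  obtain ⟨M, hM, hMeq⟩ := aux_val b hb m hm v e he
  rw [← hq, ← hde] at hMeq
  have h2M : (2 : ℤ) ∣ M := by
    have hdvd3 : (2 : ℤ) ^ (b + v) * 2 ∣ 2 ^ (b + v) * M := by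
      rw [← hMeq]
      refine dvd_trans ?_ hdvd2
      rw [← pow_succ]
      exact pow_dvd_pow 2 (by omega)
    exact (mul_dvd_mul_iff_left (pow_ne_zero (b + v) (two_ne_zero (α := ℤ)))).mp hdvd3
  rw [← Int.not_even_iff_odd, even_iff_two_dvd] at hM
  exact hM h2M

theorem quotients_incongruent (t : ℤ) (ht : Odd t) (b : ℕ)
    (hb : IsLeast {b : ℕ | 0 < b ∧
      ¬(t ≡ 1 [ZMOD (2 ^ b : ℤ)] ∨ t ≡ -1 [ZMOD (2 ^ b : ℤ)])} b) :
    ∀ k : ℕ, ∀ i : ℕ, ∀ r s : ℕ, r < 2 ^ k → s < 2 ^ k → r ≠ s →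
      ¬(((t ^ 2) ^ (i + r) - 1) / 2 ^ b ≡ ((t ^ 2) ^ (i + s) - 1) / 2 ^ b
          [ZMOD (2 ^ k : ℤ)]) := by
  obtain ⟨⟨hbpos, hbnot⟩, hbmin⟩ := hb
  -- step 1 : b ≥ 3
  have hb3 : 3 ≤ b := by
    by_contra h
    push_neg at h
    interval_cases b
    · apply hbnot
      left
      rw [Int.modEq_iff_dvd]
      obtain ⟨n, hn⟩ := ht
      exact ⟨-n, by rw [hn]; ring⟩
    · apply hbnot
      obtain ⟨n, hn⟩ := ht
      rcases Int.even_or_odd n with ⟨j, hj⟩ | ⟨j, hj⟩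
      · left; rw [Int.modEq_iff_dvd]; exact ⟨-j, by rw [hn, hj]; ring⟩
      · right; rw [Int.modEq_iff_dvd]; exact ⟨-(j + 1), by rw [hn, hj]; ring⟩
  -- step 2 : t^2 = 1 + 2^b * m with m odd
  have hkey : ∃ m : ℤ, Odd m ∧ t ^ 2 = 1 + 2 ^ b * m := by
    have hbm : (b - 1) ∉ {b : ℕ | 0 < b ∧
        ¬(t ≡ 1 [ZMOD (2 ^ b : ℤ)] ∨ t ≡ -1 [ZMOD (2 ^ b : ℤ)])} := by
      intro hmem
      exact absurd (hbmin hmem) (by omega)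
    simp only [Set.mem_setOf_eq, not_and, not_not] at hbm
    have hmem := hbm (by omega)
    obtain ⟨b', rfl⟩ : ∃ b', b = b' + 3 := ⟨b - 3, by omega⟩
    rcases hmem with h1 | h1
    · rw [Int.modEq_iff_dvd] at h1
      obtain ⟨u, hu⟩ := h1
      have htu : t = 1 - 2 ^ (b' + 2) * u := by
        have : (1 : ℤ) - t = 2 ^ (b' + 3 - 1) * u := hu
        norm_num at this ⊢
        omega
      have huodd : Odd u := by
        rw [← Int.not_even_iff_odd]
        rintro ⟨j, hj⟩
        apply hbnot; left
        rw [Int.modEq_iff_dvd]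
        exact ⟨j, by rw [htu, hj]; ring⟩
      refine ⟨u * (2 ^ (b' + 1) * u - 1), ?_, by rw [htu]; ring⟩
      exact huodd.mul ((Even.mul_right ⟨2 ^ b', by ring⟩ u).sub_odd odd_one)
    · rw [Int.modEq_iff_dvd] at h1
      obtain ⟨u, hu⟩ := h1
      have htu : t = -1 - 2 ^ (b' + 2) * u := by
        have : (-1 : ℤ) - t = 2 ^ (b' + 3 - 1) * u := hu
        norm_num at this ⊢
        omega
      have huodd : Odd u := by
        rw [← Int.not_even_iff_odd]
        rintro ⟨j, hj⟩
        apply hbnot; right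
        rw [Int.modEq_iff_dvd]
        exact ⟨j, by rw [htu, hj]; ring⟩
      refine ⟨u * (2 ^ (b' + 1) * u + 1), ?_, by rw [htu]; ring⟩
      exact huodd.mul ((Even.mul_right ⟨2 ^ b', by ring⟩ u).add_odd odd_one)
  obtain ⟨m, hm, hq⟩ := hkey
  intro k i r s hr hs hrs
  rcases Nat.lt_or_ge r s with h | h
  · exact aux_main b (by omega) m hm (t ^ 2) hq k i r s h (by omega)
  · have h' : s < r := by omega
    intro hmod
    exact aux_main b (by omega) m hm (t ^ 2) hq k i s r h' (by omega) hmod.symm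
end

section
/- Let t be an odd integer and let b be the smallest positive integer such that t ≢ ±1 (mod 2^b). Fix c ≥ 0 and define s(n) = ((t^2)^(n+c) - 1)/2^b. Then for every n ≥ 1, the least positive integer m such that s(0), s(1), ..., s(n-1) are pairwise incongruent modulo m equals 2^⌈log₂ n⌉. -/
lemma disc_odd_cast {x : ℤ} (h : Odd x) : ((x : ℤ) : ZMod 2) = 1 := by
  obtain ⟨k, hk⟩ := h
  rw [hk]; push_cast
  have h2 : (2 : ZMod 2) = 0 := by decide
  rw [h2]; ring

-- valuation lemma
lemma disc_key (q : ℤ) (b : ℕ) (hb : 2 ≤ b) (w : ℤ) (hw : Odd w) (hq : q - 1 = 2^b * w) :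
    ∀ α κ : ℕ, Odd κ → ∃ u : ℤ, Odd u ∧ q ^ (2^α * κ) - 1 = 2^(b+α) * u := by
  obtain ⟨B, rfl⟩ : ∃ B, b = B + 2 := ⟨b - 2, by omega⟩
  have hqodd : Odd q := by
    have : q = 2^(B+2)*w + 1 := by linarith
    rw [this]; exact Even.add_one ⟨2^(B+1)*w, by ring⟩
  intro α
  induction α with
  | zero =>
    intro κ hκ
    have hgeom : q ^ κ - 1 = (q - 1) * (∑ i ∈ Finset.range κ, q ^ i) := by
      rw [mul_comm, geom_sum_mul]
    have hsum : Odd (∑ i ∈ Finset.range κ, q ^ i) := by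
      rw [← Int.not_even_iff_odd]
      rintro ⟨k, hk⟩
      have h2 : ((∑ i ∈ Finset.range κ, q ^ i : ℤ) : ZMod 2) = 0 := by
        rw [hk]; push_cast
        have h2 : (2 : ZMod 2) = 0 := by decide
        calc ((k:ZMod 2) + k) = 2 * k := by ring
        _ = 0 := by rw [h2]; ring
      rw [Int.cast_sum] at h2
      simp only [Int.cast_pow, disc_odd_cast hqodd, one_pow] at h2
      simp only [Finset.sum_const, Finset.card_range, nsmul_eq_mul, mul_one] at h2
      have hκ2 : ((κ : ℕ) : ZMod 2) = 1 := by
        conv_lhs => rw [← Nat.mod_add_div κ 2, Nat.odd_iff.1 hκ]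
        push_cast
        have h2 : (2 : ZMod 2) = 0 := by decide
        rw [h2]; ring
      rw [hκ2] at h2; exact one_ne_zero h2
    refine ⟨w * (∑ i ∈ Finset.range κ, q ^ i), hw.mul hsum, ?_⟩
    simp only [pow_zero, one_mul, add_zero]
    rw [hgeom, hq]; ring
  | succ α ih =>
    intro κ hκ
    obtain ⟨u, hu, h1⟩ := ih κ hκ
    refine ⟨u * (2^(B+1+α)*u + 1), hu.mul (Even.add_one ⟨2^(B+α)*u, by ring⟩), ?_⟩
    have hexp : 2^(α+1)*κ = (2^α*κ)*2 := by ring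
    rw [hexp, pow_mul]
    have hA1 : q ^ (2^α*κ) + 1 = 2 * (2^(B+1+α)*u + 1) := by
      have : q ^ (2^α*κ) = 2^(B+2+α)*u + 1 := by linarith
      rw [this]; ring
    have h2 : (q ^ (2^α*κ))^2 - 1 = (q ^ (2^α*κ) - 1) * (q ^ (2^α*κ) + 1) := by ring
    rw [h2, h1, hA1]; ring


lemma disc_order (t : ℤ) (h : ℕ) (hh : Odd h) (hpos : 0 < h) (hcop : IsCoprime (h:ℤ) t) :
    ∃ d : ℕ, 0 < d ∧ (h:ℤ) ∣ (t^2)^d - 1 ∧ ((h = 1 ∧ d = 1) ∨ 2*d + 1 ≤ h) := by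
  rcases eq_or_lt_of_le (Nat.succ_le_of_lt hpos) with h1 | h2
  · exact ⟨1, one_pos, by simp [← h1], Or.inl ⟨h1.symm, rfl⟩⟩
  have h3 : 3 ≤ h := by have := Nat.odd_iff.1 hh; omega
  haveI : NeZero h := ⟨by omega⟩
  have hcopn : Nat.Coprime t.natAbs h := by
    have := Int.isCoprime_iff_gcd_eq_one.1 hcop
    rw [Int.gcd, Int.natAbs_natCast] at this
    exact Nat.Coprime.symm this
  set u : (ZMod h)ˣ := ZMod.unitOfCoprime t.natAbs hcopn with hu
  have hDdvd : orderOf u ∣ Nat.totient h := by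
    rw [← ZMod.card_units_eq_totient]
    exact orderOf_dvd_card
  have hDpos : 0 < orderOf u := orderOf_pos u
  have htot_even : Even (Nat.totient h) := Nat.totient_even (by omega)
  have htot_lt : Nat.totient h < h := Nat.totient_lt h (by omega)
  have htot_pos : 0 < Nat.totient h := Nat.totient_pos.2 (by omega)
  set d := orderOf (u^2) with hd
  have hdval : d = orderOf u / Nat.gcd (orderOf u) 2 := by rw [hd, orderOf_pow]
  have hdpos : 0 < d := orderOf_pos _
  refine ⟨d, hdpos, ?_, Or.inr ?_⟩
  · have hpow : (u^2)^d = 1 := pow_orderOf_eq_one (u^2)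
    have hcast : ((u : ZMod h))^(2*d) = 1 := by
      have hpow2 : u ^ (2*d) = 1 := by rw [pow_mul]; exact hpow
      rw [← Units.val_pow_eq_pow_val, hpow2, Units.val_one]
    have hval : ((t.natAbs : ZMod h))^(2*d) = 1 := by
      rw [← ZMod.coe_unitOfCoprime t.natAbs hcopn, ← hu]; exact hcast
    have key : ((t : ℤ) : ZMod h)^(2*d) = 1 := by
      rcases Int.natAbs_eq t with he | he
      · rw [he, Int.cast_natCast]; exact hval
      · rw [he, Int.cast_neg, Int.cast_natCast, Even.neg_pow ⟨d, two_mul d⟩]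
        exact hval
    have hz : (((t^2)^d - 1 : ℤ) : ZMod h) = 0 := by
      push_cast
      rw [sub_eq_zero, ← pow_mul]
      exact key
    exact_mod_cast (ZMod.intCast_zmod_eq_zero_iff_dvd _ h).1 hz
  · have h2d : 2 * d ≤ Nat.totient h := by
      have hDle : orderOf u ≤ Nat.totient h := Nat.le_of_dvd htot_pos hDdvd
      rcases Nat.even_or_odd (orderOf u) with hE | hO
      · have hgcd : Nat.gcd (orderOf u) 2 = 2 := Nat.gcd_eq_right hE.two_dvd
        rw [hdval, hgcd]
        have h2D := hE.two_dvd
        omega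
      · have hg : Nat.gcd (orderOf u) 2 = 1 := by
          have hdvd2 : Nat.gcd (orderOf u) 2 ∣ 2 := Nat.gcd_dvd_right _ _
          rcases (Nat.dvd_prime Nat.prime_two).1 hdvd2 with hg | hg
          · exact hg
          · exfalso
            have : 2 ∣ orderOf u := hg ▸ Nat.gcd_dvd_left _ _
            have := Nat.odd_iff.1 hO
            omega
        rw [hdval, hg, Nat.div_one]
        obtain ⟨k, hk⟩ := hDdvd
        have hk2 : 2 ≤ k := by
          rcases Nat.lt_or_ge k 2 with hlt | hge
          · interval_cases k
            · omega
            · exfalso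
              rw [hk, mul_one] at htot_even
              have := Nat.odd_iff.1 hO
              rcases htot_even with ⟨r, hr⟩
              omega
          · exact hge
        calc 2 * orderOf u ≤ orderOf u * k := by nlinarith
        _ = Nat.totient h := hk.symm
    omega


lemma disc_split (t : ℤ) : ∀ N : ℕ, 0 < N → Odd N →
    ∃ g h V : ℕ, N = g * h ∧ IsCoprime (h:ℤ) t ∧ (g:ℤ) ∣ t^V ∧
      ((g = 1 ∧ V = 0) ∨ 2*V + 1 ≤ g) := by
  intro N
  induction N using Nat.strong_induction_on with
  | _ N ih =>
    intro hN hNodd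
    by_cases hcop : IsCoprime (N:ℤ) t
    · exact ⟨1, N, 0, (one_mul N).symm, hcop, by simp, Or.inl ⟨rfl, rfl⟩⟩
    · have hgcd : Int.gcd N t ≠ 1 := fun hg => hcop (Int.isCoprime_iff_gcd_eq_one.2 hg)
      obtain ⟨p, hp, hpdvd⟩ := Nat.exists_prime_and_dvd hgcd
      have hpN : p ∣ N := by
        have h1 : (p:ℤ) ∣ (N:ℤ) := dvd_trans (Int.natCast_dvd_natCast.2 hpdvd)
          (Int.gcd_dvd_left _ _)
        exact_mod_cast h1
      have hpt : (p:ℤ) ∣ t := dvd_trans (Int.natCast_dvd_natCast.2 hpdvd) (Int.gcd_dvd_right _ _)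
      have hpodd : Odd p := hNodd.of_dvd_nat hpN  -- name?
      have hp3 : 3 ≤ p := by
        rcases hp.two_le.lt_or_eq with h | h
        · omega
        · exfalso; rw [← h] at hpodd; exact (Nat.not_odd_iff_even.2 even_two) hpodd
      obtain ⟨N₁, hN₁⟩ := hpN
      have hN₁pos : 0 < N₁ := by
        rcases Nat.eq_zero_or_pos N₁ with h | h
        · subst h; simp at hN₁; omega
        · exact h
      have hN₁lt : N₁ < N := by
        rw [hN₁]; nlinarith
      have hN₁odd : Odd N₁ := hNodd.of_dvd_nat ⟨p, by rw [hN₁]; ring⟩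
      obtain ⟨g₁, h₁, V₁, heq, hcop₁, hdvd₁, hbound₁⟩ := ih N₁ hN₁lt hN₁pos hN₁odd
      refine ⟨p * g₁, h₁, V₁ + 1, by rw [hN₁, heq]; ring, hcop₁, ?_, ?_⟩
      · push_cast
        rw [pow_succ, mul_comm (t^V₁) t]
        exact mul_dvd_mul hpt hdvd₁
      · right
        rcases hbound₁ with ⟨hg1, hV0⟩ | hb
        · subst hg1; subst hV0; omega
        · have hg₁pos : 1 ≤ g₁ := by omega
          nlinarith


lemma disc_size (a g h d V E : ℕ) (hd : 0 < d)
    (hm : 2^a * (g * h) < 2 * 2^E)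
    (hgb : (g = 1 ∧ V = 0) ∨ 2*V + 1 ≤ g)
    (hdb : (h = 1 ∧ d = 1) ∨ 2*d + 1 ≤ h) :
    V + 2^a * d ≤ 2^E := by
  have hx1 : (1:ℕ) ≤ 2^a := Nat.one_le_two_pow
  have hE1 : (1:ℕ) ≤ 2^E := Nat.one_le_two_pow
  have hxz : (1:ℤ) ≤ 2^a := by exact_mod_cast hx1
  rcases hdb with ⟨rfl, rfl⟩ | hdb
  · -- h = 1, d = 1 : need V + 2^a ≤ 2^E
    have hg1 : 1 ≤ g := by rcases hgb with ⟨rfl, _⟩ | h2; exacts [le_refl 1, by omega]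
    have hV : 2*V + 1 ≤ g := by rcases hgb with ⟨rfl, rfl⟩ | h2; exacts [by norm_num, h2]
    rw [mul_one] at hm
    have haE : a ≤ E + 1 := by
      by_contra hcon
      push_neg at hcon
      have h1 : 2^(E+1) ≤ 2^a := Nat.pow_le_pow_right (by norm_num) (by omega)
      have h2 : 2^a ≤ 2^a*g := Nat.le_mul_of_pos_right _ (by omega)
      have h3 : 2^(E+1) = 2*2^E := by ring
      omega
    have hsplit : 2^(E+1) = 2^a * 2^(E+1-a) := by
      rw [← pow_add]; congr 1; omega
    have hgT : g < 2^(E+1-a) := by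
      have h1 : 2^a * g < 2^a * 2^(E+1-a) := by
        rw [← hsplit]
        calc 2^a * g < 2*2^E := hm
        _ = 2^(E+1) := by ring
      exact lt_of_mul_lt_mul_left h1 (Nat.zero_le _)
    have hmul : 2^a * (g+1) ≤ 2^(E+1) := by
      rw [hsplit]
      exact Nat.mul_le_mul_left _ (by omega)
    have hkey : 2*(V + 2^a) ≤ 2^a*(g+1) := by
      zify at hV ⊢
      have hgz : (1:ℤ) ≤ g := by exact_mod_cast hg1
      nlinarith [mul_nonneg (sub_nonneg.2 hxz) (sub_nonneg.2 hgz)]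
    have h2 : 2^(E+1) = 2*2^E := by ring
    omega
  · -- 2d+1 ≤ h, so h ≥ 3
    have hd1 : 1 ≤ d := hd
    have hh3 : 3 ≤ h := by omega
    rcases Nat.lt_or_ge g 3 with hglt | hgge
    · -- g ≤ 2 : then V = 0
      have hg1 : 1 ≤ g := by rcases hgb with ⟨rfl, _⟩ | h2; exacts [le_refl 1, by omega]
      have hV0 : V = 0 := by rcases hgb with ⟨_, rfl⟩ | h2; exacts [rfl, by omega]
      subst hV0
      have hh' : h ≤ g*h := Nat.le_mul_of_pos_left h (by omega)
      have h1 : 2^a*(2*d+1) ≤ 2^a * (g*h) := Nat.mul_le_mul_left _ (le_trans hdb hh')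
      have h2 : 2^a*(2*d+1) = 2*(2^a*d) + 2^a := by ring
      simp only [zero_add]
      omega
    · -- g ≥ 3, h ≥ 3
      have hV : 2*V + 1 ≤ g := by rcases hgb with ⟨rfl, _⟩ | h2; exacts [by omega, h2]
      have key : 2*(V + 2^a*d) + 1 ≤ 2*2^E := by
        zify at hm hV hdb ⊢
        have hgz : (3:ℤ) ≤ g := by exact_mod_cast hgge
        have hhz : (3:ℤ) ≤ h := by exact_mod_cast hh3
        have h2 : (0:ℤ) ≤ 2^a * ((h:ℤ) - 1 - 2*d) := by
          apply mul_nonneg (by positivity); linarith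
        have h3 : (0:ℤ) ≤ 2^a * (((g:ℤ)-1)*((h:ℤ)-1) - 4) := by
          apply mul_nonneg (by positivity)
          nlinarith
        have h4 : (0:ℤ) ≤ ((2:ℤ)^a - 1) * g := by
          apply mul_nonneg (by linarith); positivity
        nlinarith
      omega


lemma disc_sq (t ε : ℤ) (hε : ε = 1 ∨ ε = -1) (B : ℕ) (u : ℤ) (hu : Odd u)
    (htu : t - ε = 2^(B+2) * u) : ∃ w : ℤ, Odd w ∧ t^2 - 1 = 2^(B+3) * w := by
  refine ⟨ε*u + 2^(B+1)*u^2, ?_, ?_⟩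
  · apply Odd.add_even
    · rcases hε with rfl | rfl
      · rwa [one_mul]
      · rw [neg_one_mul]; exact hu.neg
    · exact ⟨2^B*u^2, by ring⟩
  · have hε2 : ε^2 = 1 := by rcases hε with rfl | rfl <;> norm_num
    have htε : t = ε + 2^(B+2)*u := by linarith
    rw [htε]
    linear_combination hε2

theorem shifted_discriminator (t : ℤ) (ht : Odd t) (b : ℕ)
    (hb : IsLeast {b : ℕ | 0 < b ∧
      ¬(t ≡ 1 [ZMOD (2 ^ b : ℤ)] ∨ t ≡ -1 [ZMOD (2 ^ b : ℤ)])} b)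
    (c : ℕ) (s : ℕ → ℤ) (hsdef : ∀ n, s n = ((t ^ 2) ^ (n + c) - 1) / 2 ^ b) :
    ∀ n : ℕ, 1 ≤ n →
      IsLeast {m : ℕ | 0 < m ∧ ∀ i j : ℕ, i < n → j < n → i ≠ j →
        ¬(s i ≡ s j [ZMOD (m : ℤ)])} (2 ^ Nat.clog 2 n) := by
  obtain ⟨⟨hbpos, hbmem⟩, hmin⟩ := hb
  have hbm : ¬(t ≡ 1 [ZMOD ((2:ℤ)^b)]) ∧ ¬(t ≡ -1 [ZMOD ((2:ℤ)^b)]) :=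
    ⟨fun h => hbmem (Or.inl h), fun h => hbmem (Or.inr h)⟩
  have hb3 : 3 ≤ b := by
    by_contra hcon
    push_neg at hcon
    interval_cases b
    · apply hbmem
      left
      rw [pow_one]
      obtain ⟨k, hk⟩ := ht
      exact Int.modEq_iff_dvd.2 ⟨-k, by omega⟩
    · obtain ⟨k, hk⟩ := ht
      rcases Int.even_or_odd k with ⟨j, hj⟩ | ⟨j, hj⟩
      · apply hbmem
        left
        refine Int.modEq_iff_dvd.2 ⟨-j, ?_⟩
        norm_num
        omega
      · apply hbmem
        right
        refine Int.modEq_iff_dvd.2 ⟨-j-1, ?_⟩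
        norm_num
        omega
  have hprev : t ≡ 1 [ZMOD ((2:ℤ)^(b-1))] ∨ t ≡ -1 [ZMOD ((2:ℤ)^(b-1))] := by
    by_contra hno
    have h1 : b ≤ b - 1 := hmin ⟨by omega, hno⟩
    omega
  have hw : ∃ w : ℤ, Odd w ∧ t^2 - 1 = 2^b * w := by
    have hex : ∃ ε : ℤ, (ε = 1 ∨ ε = -1) ∧ t ≡ ε [ZMOD ((2:ℤ)^(b-1))] := by
      rcases hprev with h1 | h1
      exacts [⟨1, Or.inl rfl, h1⟩, ⟨-1, Or.inr rfl, h1⟩]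
    obtain ⟨ε, hεor, hεmod⟩ := hex
    obtain ⟨u', hu'⟩ := Int.ModEq.dvd hεmod
    have htu : t - ε = 2^(b-1) * (-u') := by
      rw [mul_neg, ← hu']; ring
    have huodd : Odd (-u') := by
      rcases Int.even_or_odd u' with ⟨v, hv⟩ | ho
      · exfalso
        have heq : ε - t = 2^b * v := by
          rw [hu', hv]
          have h2 : (2:ℤ)^b = 2^(b-1)*2 := by
            rw [← pow_succ]
            congr 1
            omega
          rw [h2]; ring
        have hmod : t ≡ ε [ZMOD ((2:ℤ)^b)] := Int.modEq_iff_dvd.2 ⟨v, heq⟩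
        rcases hεor with rfl | rfl
        · exact hbm.1 hmod
        · exact hbm.2 hmod
      · exact ho.neg
    obtain ⟨w, hw1, hw2⟩ := disc_sq t ε hεor (b-3) (-u') huodd
      (by rw [show b - 3 + 2 = b - 1 from by omega]; exact htu)
    exact ⟨w, hw1, by rw [show b = b - 3 + 3 from by omega]; exact hw2⟩
  obtain ⟨w, hwodd, hqw⟩ := hw
  have hkey := disc_key (t^2) b (by omega) w hwodd hqw
  have hq_odd : Odd (t^2) := ht.pow
  have hsval : ∀ k : ℕ, 2^b * s k = (t^2)^(k+c) - 1 := by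
    intro k
    rcases Nat.eq_zero_or_pos (k + c) with h0 | h1
    · rw [hsdef, h0]
      simp
    · have hdvd : ((2:ℤ)^b) ∣ (t^2)^(k+c) - 1 := by
        have h2 := sub_dvd_pow_sub_pow (t^2) 1 (k+c)
        rw [one_pow] at h2
        exact dvd_trans ⟨w, hqw⟩ h2
      rw [hsdef]
      exact Int.mul_ediv_cancel' hdvd
  have hdiff : ∀ i j : ℕ, 2^b * (s i - s j) = (t^2)^(i+c) - (t^2)^(j+c) := by
    intro i j
    rw [mul_sub, hsval, hsval]
    ring
  intro n hn
  have hnle : n ≤ 2^(Nat.clog 2 n) := Nat.le_pow_clog one_lt_two n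
  constructor
  · refine ⟨by positivity, ?_⟩
    have key : ∀ i j : ℕ, j < i → i < n →
        ¬(s i ≡ s j [ZMOD ((2^(Nat.clog 2 n) : ℕ) : ℤ)]) := by
      intro i j hji hi hmod
      have hdv : ((2^(Nat.clog 2 n) : ℕ) : ℤ) ∣ s j - s i := Int.ModEq.dvd hmod
      obtain ⟨α, κ, hκodd, hkeq⟩ := Nat.exists_eq_two_pow_mul_odd (n := i - j) (by omega)
      obtain ⟨u, huodd, hueq⟩ := hkey α κ hκodd
      have h1 : 2^b * (s i - s j) = (t^2)^(j+c) * ((t^2)^(i-j) - 1) := by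
        rw [hdiff, show i + c = (i-j) + (j + c) from by omega, pow_add]
        ring
      have h3 : s i - s j = (t^2)^(j+c) * (2^α * u) := by
        apply mul_left_cancel₀ (pow_ne_zero b (two_ne_zero : (2:ℤ) ≠ 0))
        rw [h1, hkeq, hueq]
        ring
      have hαlt : α < Nat.clog 2 n := by
        have h5 : 2^α ≤ i - j := by
          have h6 : 1 ≤ κ := by have := Nat.odd_iff.1 hκodd; omega
          calc 2^α = 2^α * 1 := by ring
          _ ≤ 2^α*κ := Nat.mul_le_mul_left _ h6
          _ = i - j := hkeq.symm
        have h6 : 2^α < 2^(Nat.clog 2 n) := by omega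
        exact (Nat.pow_lt_pow_iff_right (by norm_num)).1 h6
      have hodd2 : Odd ((t^2)^(j+c) * u) := (hq_odd.pow).mul huodd
      have hdv2 : (2:ℤ)^(α+1) ∣ 2^α * ((t^2)^(j+c) * u) := by
        apply dvd_trans (pow_dvd_pow (2:ℤ) hαlt)
        have h7 := hdv
        rw [show s j - s i = -((t^2)^(j+c) * (2^α * u)) from by rw [← h3]; ring] at h7
        have h8 : ((2^(Nat.clog 2 n):ℕ):ℤ) = (2:ℤ)^(Nat.clog 2 n) := by push_cast; rfl
        rw [h8] at h7
        have h9 := dvd_neg.1 h7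
        rwa [show (t^2)^(j+c) * (2^α * u) = 2^α * ((t^2)^(j+c) * u) from by ring] at h9
      rw [pow_succ] at hdv2
      have h9 : (2:ℤ) ∣ (t^2)^(j+c)*u :=
        (mul_dvd_mul_iff_left (pow_ne_zero α (two_ne_zero : (2:ℤ) ≠ 0))).1 hdv2
      obtain ⟨r, hr⟩ := hodd2
      obtain ⟨v, hv⟩ := h9
      omega
    intro i j hi hj hij hmod
    rcases Nat.lt_or_ge i j with hlt | hge
    · exact key j i hlt hj hmod.symm
    · exact key i j (by omega) hi hmod
  · rintro m ⟨hmpos, hmdisc⟩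
    by_contra hcon
    push_neg at hcon
    have hn2 : 2 ≤ n := by
      by_contra hn1
      have hne1 : n = 1 := by omega
      rw [hne1, Nat.clog_one_right] at hcon
      simp at hcon
      omega
    have hcpos : 0 < Nat.clog 2 n := Nat.clog_pos (by norm_num) (by omega)
    have hlow : 2^(Nat.clog 2 n - 1) < n :=
      Nat.pow_pred_clog_lt_self (by norm_num) (by omega)
    obtain ⟨a, m₀, hm₀odd, hmeq⟩ := Nat.exists_eq_two_pow_mul_odd (n := m) (by omega)
    have hm₀pos : 0 < m₀ := by
      rcases Nat.eq_zero_or_pos m₀ with rfl | h1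
      · rw [hmeq] at hmpos; simp at hmpos
      · exact h1
    obtain ⟨gg, hh, V, hm₀eq, hcophT, hgdvd, hgbound⟩ := disc_split t m₀ hm₀pos hm₀odd
    have hhodd : Odd hh := hm₀odd.of_dvd_nat ⟨gg, by rw [hm₀eq]; ring⟩
    have hggodd : Odd gg := hm₀odd.of_dvd_nat ⟨hh, hm₀eq⟩
    have hhpos : 0 < hh := by
      rcases Nat.eq_zero_or_pos hh with rfl | h1
      · rw [hm₀eq] at hm₀pos; simp at hm₀pos
      · exact h1
    obtain ⟨d, hdpos, hddvd, hdbound⟩ := disc_order t hh hhodd hhpos hcophT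
    have hsize : V + 2^a * d ≤ 2^(Nat.clog 2 n - 1) := by
      apply disc_size a gg hh d V (Nat.clog 2 n - 1) hdpos ?_ hgbound hdbound
      have h1 : 2*2^(Nat.clog 2 n - 1) = 2^(Nat.clog 2 n) := by
        rw [show Nat.clog 2 n = (Nat.clog 2 n - 1) + 1 from by omega, pow_succ']
        simp
      rw [h1, ← hm₀eq, ← hmeq]
      exact hcon
    have hPpos : 0 < 2^a * d := Nat.mul_pos (by positivity) hdpos
    have hi₀lt : (V - c) + 2^a * d < n := by omega
    have hj₀lt : V - c < n := by omega
    have hgq : ((gg:ℕ):ℤ) ∣ (t^2)^((V-c)+c) := by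
      apply dvd_trans hgdvd
      rw [← pow_mul]
      exact pow_dvd_pow t (by omega)
    have h2bP : ((2:ℤ)^(b+a)) ∣ (t^2)^(2^a*d) - 1 := by
      obtain ⟨α₀, κ₀, hκ₀odd, hdeq⟩ := Nat.exists_eq_two_pow_mul_odd (n := d) (by omega)
      obtain ⟨u, huodd, hueq⟩ := hkey (a+α₀) κ₀ hκ₀odd
      rw [show 2^a*d = 2^(a+α₀)*κ₀ from by rw [hdeq, pow_add]; ring, hueq]
      exact ⟨2^α₀*u, by rw [pow_add, pow_add]; ring⟩
    have hhPdvd : ((hh:ℕ):ℤ) ∣ (t^2)^(2^a*d) - 1 := by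
      apply dvd_trans hddvd
      have h1 := sub_dvd_pow_sub_pow ((t^2)^d) 1 (2^a)
      rw [one_pow] at h1
      rwa [show (t^2 : ℤ)^(2^a*d) = ((t^2)^d)^(2^a) from by rw [← pow_mul ((t:ℤ)^2) d (2^a)]; ring]
    have hoddcop : ∀ x : ℕ, Odd x → IsCoprime (2:ℤ) (x:ℤ) := by
      intro x hx
      rw [Int.isCoprime_iff_gcd_eq_one]
      have h1 : Nat.Coprime 2 x := (Nat.prime_two.coprime_iff_not_dvd).2 (by
        intro hdvd
        have := Nat.odd_iff.1 hx
        omega)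
      simpa [Int.gcd] using h1
    have hcop2h : IsCoprime ((2:ℤ)^(b+a)) (hh:ℤ) := (hoddcop hh hhodd).pow_left
    have hcopg2h : IsCoprime ((gg:ℕ):ℤ) ((2:ℤ)^(b+a) * hh) := by
      apply IsCoprime.mul_right
      · exact ((hoddcop gg hggodd).symm).pow_right
      · exact (IsCoprime.of_isCoprime_of_dvd_right (hcophT.pow_right (n := V)) hgdvd).symm
    have htotal : ((2:ℤ)^(b+a) * hh * gg) ∣ (t^2)^((V-c)+c) * ((t^2)^(2^a*d) - 1) := by
      have hA : ((2:ℤ)^(b+a) * hh) ∣ (t^2)^((V-c)+c) * ((t^2)^(2^a*d) - 1) :=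
        Dvd.dvd.mul_left (IsCoprime.mul_dvd hcop2h h2bP hhPdvd) _
      have hB : ((gg:ℕ):ℤ) ∣ (t^2)^((V-c)+c) * ((t^2)^(2^a*d) - 1) :=
        Dvd.dvd.mul_right hgq _
      have hC := IsCoprime.mul_dvd hcopg2h hB hA
      rwa [show ((gg:ℤ) * ((2:ℤ)^(b+a)*hh)) = (2:ℤ)^(b+a) * hh * gg from by ring] at hC
    have hfinal : (m:ℤ) ∣ s ((V-c) + 2^a*d) - s (V-c) := by
      have h1 : 2^b * (s ((V-c)+2^a*d) - s (V-c)) =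
          (t^2)^((V-c)+c) * ((t^2)^(2^a*d) - 1) := by
        rw [hdiff, show (V-c) + 2^a*d + c = 2^a*d + ((V-c) + c) from by omega, pow_add]
        ring
      have h2 : ((2:ℤ)^b * m) ∣ 2^b * (s ((V-c)+2^a*d) - s (V-c)) := by
        rw [h1]
        have h3 : ((2:ℤ)^b * m) = 2^(b+a)*hh*gg := by
          rw [hmeq, hm₀eq]; push_cast; ring
        rw [h3]
        exact htotal
      exact (mul_dvd_mul_iff_left (pow_ne_zero b (two_ne_zero : (2:ℤ) ≠ 0))).1 h2
    exact hmdisc ((V-c)+2^a*d) (V-c) hi₀lt hj₀lt (by omega)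
      ((Int.modEq_iff_dvd.2 hfinal).symm)
end

section
/- Let t and a be odd integers, c ≥ 0 an integer, and let b be the smallest positive integer such that t ≢ ±1 (mod 2^b). Define s(n) = a·((t^2)^(n+c) - 1)/2^b. Then the discriminator of s satisfies D_s(n) = 2^⌈log₂ n⌉ for all n ≥ 1. -/
lemma aux_add_two_le_two_pow (L : ℕ) (h : 2 ≤ L) : L + 2 ≤ 2 ^ L := by
  induction L with
  | zero => omega
  | succ k ih =>
    rcases Nat.lt_or_ge k 2 with hk | hk
    · interval_cases k <;> simp_all
    · have h1 := ih hk
      have h2 : 1 ≤ 2 ^ k := Nat.one_le_two_pow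
      rw [pow_succ]; omega

lemma aux_even_pow_mul (cc : ℕ) (hc : 1 ≤ cc) (w : ℤ) : Even (2 ^ cc * w) := by
  obtain ⟨γ, rfl⟩ : ∃ γ, cc = γ + 1 := ⟨cc - 1, by omega⟩
  exact ⟨2 ^ γ * w, by ring⟩

lemma aux_odd_geom_sum (x : ℤ) (hx : Odd x) (m : ℕ) (hm : Odd m) :
    Odd (∑ i ∈ Finset.range m, x ^ i) := by
  rw [Int.odd_iff, Finset.sum_int_mod]
  have h1 : ∀ i ∈ Finset.range m, x ^ i % 2 = (1 : ℤ) := fun i _ => Int.odd_iff.mp (hx.pow)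
  rw [Finset.sum_congr rfl h1]
  simp only [Finset.sum_const, Finset.card_range, nsmul_eq_mul, mul_one]
  rw [← Int.odd_iff]
  exact Int.odd_coe_nat m |>.mpr hm

lemma aux_odd_pow_eq (cc : ℕ) (hc : 2 ≤ cc) (w : ℤ) (hw : Odd w) (m : ℕ) (hm : Odd m) :
    ∃ u : ℤ, Odd u ∧ (1 + 2 ^ cc * w) ^ m = 1 + 2 ^ cc * u := by
  have hx : Odd (1 + 2 ^ cc * w) := (aux_even_pow_mul cc (by omega) w).one_add
  refine ⟨(∑ i ∈ Finset.range m, (1 + 2 ^ cc * w) ^ i) * w,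
    (aux_odd_geom_sum _ hx m hm).mul hw, ?_⟩
  have h := geom_sum_mul (1 + 2 ^ cc * w) m
  linear_combination -h

lemma aux_sq_step_s18 (ss : ℕ) (hs : 2 ≤ ss) (u : ℤ) (hu : Odd u) :
    ∃ v : ℤ, Odd v ∧ (1 + 2 ^ ss * u) ^ 2 = 1 + 2 ^ (ss + 1) * v := by
  obtain ⟨γ, rfl⟩ : ∃ γ, ss = γ + 2 := ⟨ss - 2, by omega⟩
  refine ⟨u + 2 ^ (γ + 1) * u ^ 2, hu.add_even (aux_even_pow_mul _ (by omega) _), ?_⟩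
  ring

lemma aux_pow_2pow (cc : ℕ) (hc : 2 ≤ cc) (w : ℤ) (hw : Odd w) (k m : ℕ) (hm : Odd m) :
    ∃ u : ℤ, Odd u ∧ (1 + 2 ^ cc * w) ^ (2 ^ k * m) = 1 + 2 ^ (cc + k) * u := by
  induction k with
  | zero => simpa using aux_odd_pow_eq cc hc w hw m hm
  | succ k ih =>
    obtain ⟨u, hu, hequ⟩ := ih
    obtain ⟨v, hv, heqv⟩ := aux_sq_step_s18 (cc + k) (by omega) u hu
    refine ⟨v, hv, ?_⟩
    have : 2 ^ (k + 1) * m = 2 ^ k * m * 2 := by ring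
    rw [this, pow_mul, hequ, heqv]
    ring_nf

lemma aux_val_form (cc : ℕ) (hc : 2 ≤ cc) (w : ℤ) (hw : Odd w) (d : ℕ) (hd : d ≠ 0) :
    ∃ u : ℤ, Odd u ∧ (1 + 2 ^ cc * w) ^ d = 1 + 2 ^ (cc + d.factorization 2) * u := by
  have hm : Odd (d / 2 ^ d.factorization 2) :=
    Nat.odd_iff.mpr (Nat.two_dvd_ne_zero.mp (Nat.not_dvd_ordCompl Nat.prime_two hd))
  have hself := Nat.ordProj_mul_ordCompl_eq_self d 2
  obtain ⟨u, hu, hequ⟩ := aux_pow_2pow cc hc w hw (d.factorization 2) _ hm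
  refine ⟨u, hu, ?_⟩
  conv_lhs => rw [← hself]
  exact hequ

lemma aux_struct (t : ℤ) (ht : Odd t) (b : ℕ)
    (hb : IsLeast {b : ℕ | 0 < b ∧
      ¬(t ≡ 1 [ZMOD (2 ^ b : ℤ)] ∨ t ≡ -1 [ZMOD (2 ^ b : ℤ)])} b) :
    3 ≤ b ∧ ∃ w : ℤ, Odd w ∧ t ^ 2 = 1 + 2 ^ b * w := by
  obtain ⟨⟨hb0, hbS⟩, hmin⟩ := hb
  obtain ⟨k0, hk0⟩ := ht
  have hb1 : b ≠ 1 := by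
    rintro rfl
    exact hbS (Or.inl (Int.modEq_iff_dvd.mpr ⟨-k0, by omega⟩))
  have hb2 : b ≠ 2 := by
    rintro rfl
    rcases Int.even_or_odd k0 with ⟨j, hj⟩ | ⟨j, hj⟩
    · exact hbS (Or.inl (Int.modEq_iff_dvd.mpr ⟨-j, by push_cast; omega⟩))
    · exact hbS (Or.inr (Int.modEq_iff_dvd.mpr ⟨-(j+1), by push_cast; omega⟩))
  have hb3 : 3 ≤ b := by omega
  refine ⟨hb3, ?_⟩
  -- b - 1 is not in the set
  have hnotmem : ¬ (0 < b - 1 ∧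
      ¬(t ≡ 1 [ZMOD (2 ^ (b-1) : ℤ)] ∨ t ≡ -1 [ZMOD (2 ^ (b-1) : ℤ)])) := by
    intro hmem
    have := hmin hmem
    omega
  have hcong : t ≡ 1 [ZMOD (2 ^ (b-1) : ℤ)] ∨ t ≡ -1 [ZMOD (2 ^ (b-1) : ℤ)] := by
    by_contra hcon
    exact hnotmem ⟨by omega, hcon⟩
  obtain ⟨γ, hγ⟩ : ∃ γ, b = γ + 2 := ⟨b - 2, by omega⟩
  subst hγ
  have hγ1 : 1 ≤ γ := by omega
  -- from hcong : t = ε + 2^(γ+1) * k with k odd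
  have key : ∀ ε : ℤ, (ε = 1 ∨ ε = -1) → t ≡ ε [ZMOD (2 ^ (γ+1) : ℤ)] →
      ∃ w : ℤ, Odd w ∧ t ^ 2 = 1 + 2 ^ (γ + 2) * w := by
    intro ε hε hmod
    obtain ⟨k, hk⟩ := Int.modEq_iff_dvd.mp hmod
    -- hk : ε - t = 2^(γ+1) * k, so t = ε - 2^(γ+1) k
    have ht' : t = ε - 2 ^ (γ + 1) * k := by omega
    have hkodd : Odd k := by
      rcases Int.even_or_odd k with ⟨j, hj⟩ | h
      · exfalso
        have : t ≡ ε [ZMOD (2 ^ (γ + 2) : ℤ)] := by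
          apply Int.modEq_iff_dvd.mpr
          refine ⟨j, ?_⟩
          rw [hk, hj]
          ring
        rcases hε with rfl | rfl
        · exact hbS (Or.inl this)
        · exact hbS (Or.inr this)
      · exact h
    refine ⟨-ε * k + 2 ^ γ * k ^ 2, ?_, ?_⟩
    · apply Odd.add_even
      · rcases hε with rfl | rfl
        · simpa using hkodd.neg
        · simpa using hkodd
      · obtain ⟨δ, rfl⟩ : ∃ δ, γ = δ + 1 := ⟨γ - 1, by omega⟩
        exact ⟨2 ^ δ * k ^ 2, by ring⟩
    · have hε2 : ε ^ 2 = 1 := by rcases hε with rfl | rfl <;> ring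
      rw [ht']
      have e1 : (2:ℤ) ^ (γ + 1) = 2 ^ γ * 2 := by ring
      have e2 : (2:ℤ) ^ (γ + 2) = 2 ^ γ * 4 := by ring
      rw [e1, e2]
      nlinarith [hε2, sq_nonneg ((2:ℤ)^γ)]
  rcases hcong with h | h
  · exact key 1 (Or.inl rfl) (by simpa using h)
  · exact key (-1) (Or.inr rfl) (by simpa using h)

lemma aux_dvd_shrink {a b M N : ℕ} (ha : a ≠ 0) (hb : b ≠ 0) (h : a ∣ b ^ M)
    (hN : a < 2 ^ N) : a ∣ b ^ N := by
  have hbM : (b:ℕ) ^ M ≠ 0 := pow_ne_zero _ hb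
  have hbN : (b:ℕ) ^ N ≠ 0 := pow_ne_zero _ hb
  rw [← Nat.factorization_le_iff_dvd ha hbN]
  rw [← Nat.factorization_le_iff_dvd ha hbM] at h
  intro p
  have hM := h p
  simp only [Nat.factorization_pow, Finsupp.smul_apply, smul_eq_mul] at hM ⊢
  by_cases hp : p.Prime
  · by_cases hbp : b.factorization p = 0
    · simp [hbp] at hM ⊢; omega
    · have h1 : p ^ a.factorization p ≤ a := Nat.ordProj_le p ha
      have h2 : 2 ^ a.factorization p ≤ p ^ a.factorization p :=
        Nat.pow_le_pow_left hp.two_le _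
      have h3 : a.factorization p < N := by
        have : 2 ^ a.factorization p < 2 ^ N := by omega
        exact (Nat.pow_lt_pow_iff_right (by omega)).mp this
      calc a.factorization p ≤ N * 1 := by omega
        _ ≤ N * b.factorization p := Nat.mul_le_mul_left N (by omega)
  · simp [Nat.factorization_eq_zero_of_not_prime _ hp]

lemma aux_order_sq_bound (q : ℕ) (hq : 3 ≤ q) (g : (ZMod q)ˣ) :
    2 * orderOf (g ^ 2) ≤ q - 1 := by
  haveI : NeZero q := ⟨by omega⟩
  have hcard : Fintype.card (ZMod q)ˣ = q.totient := ZMod.card_units_eq_totient q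
  have htot : q.totient ≤ q - 1 := by
    have := Nat.totient_lt q (by omega); omega
  have hDeq : orderOf (g ^ 2) = orderOf g / (orderOf g).gcd 2 := orderOf_pow g
  have hr1 : 0 < orderOf g := orderOf_pos g
  have hrcard : orderOf g ≤ Fintype.card (ZMod q)ˣ := orderOf_le_card_univ
  rcases Nat.even_or_odd (orderOf g) with he | ho
  · have hgcd : (orderOf g).gcd 2 = 2 := Nat.gcd_eq_right he.two_dvd
    rw [hDeq, hgcd]
    have : 2 * (orderOf g / 2) ≤ orderOf g := Nat.mul_div_le _ 2
    omega
  · have hgcd : (orderOf g).gcd 2 = 1 := ho.coprime_two_right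
    have hdvd : orderOf g ∣ q.totient := hcard ▸ orderOf_dvd_card
    have hne : orderOf g ≠ q.totient := by
      intro h
      have heven := Nat.totient_even (by omega : 2 < q)
      rw [← h] at heven
      exact (Nat.not_even_iff_odd.mpr ho) heven
    obtain ⟨k, hk⟩ := hdvd
    have hk2 : 2 ≤ k := by
      rcases Nat.lt_or_ge k 2 with h | h
      · interval_cases k <;> omega
      · exact h
    rw [hDeq, hgcd, Nat.div_one]
    calc 2 * orderOf g ≤ k * orderOf g := Nat.mul_le_mul_right _ hk2
      _ = q.totient := by rw [hk]; ring
      _ ≤ q - 1 := htot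

lemma aux_coprime_part (q T : ℕ) (hq : q ≠ 0) (hT : T ≠ 0) :
    Nat.Coprime (q / Nat.gcd q (T ^ (2 * q))) T := by
  set q0 := Nat.gcd q (T ^ (2 * q)) with hq0
  have hq0dvd : q0 ∣ q := Nat.gcd_dvd_left _ _
  have hq0ne : q0 ≠ 0 := Nat.gcd_ne_zero_left hq
  have hq1ne : q / q0 ≠ 0 := by
    have := Nat.le_of_dvd (by omega) hq0dvd
    have := Nat.div_pos this (by omega)
    omega
  rw [Nat.coprime_iff_gcd_eq_one]
  by_contra hg
  have hgne : Nat.gcd (q / q0) T ≠ 0 := Nat.gcd_ne_zero_right hT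
  set p := (Nat.gcd (q / q0) T).minFac with hp
  have hpp : p.Prime := Nat.minFac_prime hg
  have hpq1 : p ∣ q / q0 := (Nat.minFac_dvd _).trans (Nat.gcd_dvd_left _ _)
  have hpT : p ∣ T := (Nat.minFac_dvd _).trans (Nat.gcd_dvd_right _ _)
  have hfacdiv : (q / q0).factorization = q.factorization - q0.factorization :=
    Nat.factorization_div hq0dvd
  have hfacgcd : q0.factorization = q.factorization ⊓ (T ^ (2 * q)).factorization :=
    Nat.factorization_gcd hq (pow_ne_zero _ hT)
  have hvT : 1 ≤ T.factorization p := (Nat.Prime.factorization_pos_of_dvd hpp hT hpT)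
  have hvq : q.factorization p ≤ 2 * q * T.factorization p := by
    have h1 : 2 ^ q.factorization p ≤ p ^ q.factorization p :=
      Nat.pow_le_pow_left hpp.two_le _
    have h2 : p ^ q.factorization p ≤ q := Nat.ordProj_le p hq
    have h3 : q.factorization p < 2 ^ q.factorization p := Nat.lt_two_pow_self
    have : q.factorization p < q := by omega
    calc q.factorization p ≤ 2 * q * 1 := by omega
      _ ≤ 2 * q * T.factorization p := Nat.mul_le_mul_left _ hvT
  have hq1p : (q / q0).factorization p = 0 := by
    rw [hfacdiv, Finsupp.tsub_apply, hfacgcd, Finsupp.inf_apply,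
      Nat.factorization_pow, Finsupp.smul_apply, smul_eq_mul]
    omega
  have : 1 ≤ (q / q0).factorization p := Nat.Prime.factorization_pos_of_dvd hpp hq1ne hpq1
  omega

lemma aux_diff_formula (t a : ℤ) (b : ℕ) (w : ℤ) (hw : Odd w) (hb2 : 2 ≤ b)
    (ht2 : t ^ 2 = 1 + 2 ^ b * w) (c : ℕ) (s : ℕ → ℤ)
    (hsdef : ∀ n, s n = a * (((t ^ 2) ^ (n + c) - 1) / 2 ^ b))
    (i j : ℕ) (hij : i < j) :
    ∃ u : ℤ, Odd u ∧ (t ^ 2) ^ (j - i) = 1 + 2 ^ (b + (j - i).factorization 2) * u ∧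
      s j - s i = a * (t ^ 2) ^ (i + c) * (2 ^ ((j - i).factorization 2) * u) := by
  set d := j - i with hd
  have hd0 : d ≠ 0 := by omega
  obtain ⟨u, hu, hequ⟩ := aux_val_form b hb2 w hw d hd0
  rw [← ht2] at hequ
  set v := d.factorization 2 with hv
  refine ⟨u, hu, hequ, ?_⟩
  have hxd : (t ^ 2) ^ d - 1 = 2 ^ b * (2 ^ v * u) := by
    rw [hequ]; ring
  obtain ⟨B, hB⟩ : ∃ B : ℤ, (t ^ 2) ^ (i + c) - 1 = 2 ^ b * B := by
    rcases Nat.eq_zero_or_pos (i + c) with h0 | h0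
    · exact ⟨0, by rw [h0]; ring⟩
    · obtain ⟨u', _, hequ'⟩ := aux_val_form b hb2 w hw (i + c) (by omega)
      rw [← ht2] at hequ'
      exact ⟨2 ^ ((i+c).factorization 2) * u', by rw [hequ']; ring⟩
  have hsplit : (t ^ 2) ^ (j + c) - 1 = 2 ^ b * ((t ^ 2) ^ (i + c) * (2 ^ v * u) + B) := by
    have e1 : (t ^ 2) ^ (j + c) = (t ^ 2) ^ (i + c) * (t ^ 2) ^ d := by
      rw [← pow_add]; congr 1; omega
    rw [e1]
    linear_combination (t ^ 2) ^ (i + c) * hxd + hB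
  have h2b : (2:ℤ) ^ b ≠ 0 := by positivity
  rw [hsdef j, hsdef i, hsplit, hB, Int.mul_ediv_cancel_left _ h2b,
    Int.mul_ediv_cancel_left _ h2b]
  ring

theorem main_discriminator (t a : ℤ) (ht : Odd t) (ha : Odd a) (b : ℕ)
    (hb : IsLeast {b : ℕ | 0 < b ∧
      ¬(t ≡ 1 [ZMOD (2 ^ b : ℤ)] ∨ t ≡ -1 [ZMOD (2 ^ b : ℤ)])} b)
    (c : ℕ) (s : ℕ → ℤ)
    (hsdef : ∀ n, s n = a * (((t ^ 2) ^ (n + c) - 1) / 2 ^ b)) :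
    ∀ n : ℕ, 1 ≤ n →
      IsLeast {m : ℕ | 0 < m ∧ ∀ i j : ℕ, i < n → j < n → i ≠ j →
        ¬(s i ≡ s j [ZMOD (m : ℤ)])} (2 ^ Nat.clog 2 n) := by
  intro n hn
  obtain ⟨hb3, w, hw, ht2⟩ := aux_struct t ht b hb
  have hb2 : 2 ≤ b := by omega
  set e := Nat.clog 2 n with he
  have hne2 : n ≤ 2 ^ e := Nat.le_pow_clog one_lt_two n
  constructor
  · -- membership
    refine ⟨by positivity, ?_⟩
    have key : ∀ i j : ℕ, i < j → j < n → ¬ (s i ≡ s j [ZMOD ((2 ^ e : ℕ) : ℤ)]) := by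
      intro i j hij hjn hmod
      obtain ⟨u, hu, hxd, hform⟩ := aux_diff_formula t a b w hw hb2 ht2 c s hsdef i j hij
      have hdvd : ((2 : ℤ) ^ e) ∣ s j - s i := by
        have h := Int.ModEq.dvd hmod
        push_cast at h
        exact h
      set v := (j - i).factorization 2 with hv
      have hrearr : s j - s i = 2 ^ v * (a * (t ^ 2) ^ (i + c) * u) := by rw [hform]; ring
      have hodd : Odd (a * (t ^ 2) ^ (i + c) * u) := ((ha.mul ((ht.pow).pow)).mul hu)
      have hev : e ≤ v := by
        by_contra hev
        push_neg at hev
        rw [hrearr] at hdvd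
        have h1 : (2 : ℤ) ^ (v + 1) ∣ 2 ^ v * (a * (t ^ 2) ^ (i + c) * u) :=
          dvd_trans (pow_dvd_pow 2 (by omega)) hdvd
        rw [pow_succ, mul_comm ((2:ℤ)^v) 2] at h1
        have h2 : (2 : ℤ) ∣ (a * (t ^ 2) ^ (i + c) * u) := by
          rcases h1 with ⟨k, hk⟩
          have h2v : (2:ℤ) ^ v ≠ 0 := by positivity
          refine ⟨k, ?_⟩
          have := mul_left_cancel₀ h2v (by linarith [hk] : (2:ℤ)^v * (a * (t ^ 2) ^ (i + c) * u) = 2 ^ v * (2 * k))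
          linarith [this]
        obtain ⟨k, hk⟩ := h2
        obtain ⟨l, hl⟩ := hodd
        omega
      have hd0 : j - i ≠ 0 := by omega
      have h3 : 2 ^ e ∣ (j - i) :=
        (Nat.Prime.pow_dvd_iff_le_factorization Nat.prime_two hd0).mpr hev
      have h4 : 2 ^ e ≤ j - i := Nat.le_of_dvd (by omega) h3
      omega
    intro i j hi hj hij hmod
    rcases hij.lt_or_gt with h | h
    · exact key i j h hj hmod
    · exact key j i h hi hmod.symm
  · -- lower bound
    intro m hmem
    obtain ⟨hm0, hsep⟩ := hmem
    by_contra hlt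
    push_neg at hlt
    have hn2 : 2 ≤ n := by
      by_contra h
      push_neg at h
      have hn1 : n = 1 := by omega
      rw [hn1] at he
      rw [he] at hlt
      simp [Nat.clog_one_right] at hlt
      omega
    have he1 : 1 ≤ e := Nat.clog_pos one_lt_two hn2
    have hE : 2 ^ (e - 1) < n := by
      by_contra hEc
      push_neg at hEc
      have := (Nat.clog_le_iff_le_pow one_lt_two).mpr hEc
      omega
    have h2e : 2 ^ e = 2 ^ (e - 1) * 2 := by
      rw [← pow_succ]; congr 1; omega
    -- decomposition of m
    set f := m.factorization 2 with hf
    set q := m / 2 ^ f with hqdef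
    have hfq : 2 ^ f * q = m := Nat.ordProj_mul_ordCompl_eq_self m 2
    have hqodd : Odd q := Nat.odd_iff.mpr (Nat.two_dvd_ne_zero.mp
      (Nat.not_dvd_ordCompl Nat.prime_two (by omega)))
    have hq1pos : 1 ≤ q := by
      rcases Nat.eq_zero_or_pos q with h | h
      · rw [h] at hfq; simp at hfq; omega
      · exact h
    have hfe : f ≤ e - 1 := by
      have h2f : 2 ^ f ≤ m := Nat.ordProj_le 2 (by omega)
      have hlt2 : 2 ^ f < 2 ^ e := by omega
      have := (Nat.pow_lt_pow_iff_right (by norm_num : 1 < 2)).mp hlt2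
      omega
    set T := t.natAbs with hT
    have hT0 : T ≠ 0 := by
      rw [hT]
      intro h
      rw [Int.natAbs_eq_zero] at h
      rw [h] at ht
      simp [Int.odd_iff] at ht
    have hTsq : ((T : ℤ)) ^ 2 = t ^ 2 := by
      rw [hT]; exact Int.natAbs_sq t
    set q0 := Nat.gcd q (T ^ (2 * q)) with hq0def
    set q1 := q / q0 with hq1def
    have hq0dvd : q0 ∣ q := Nat.gcd_dvd_left _ _
    have hq0T : q0 ∣ T ^ (2 * q) := Nat.gcd_dvd_right _ _
    have hq01 : q0 * q1 = q := Nat.mul_div_cancel' hq0dvd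
    have hq0pos : 1 ≤ q0 := Nat.pos_of_ne_zero (Nat.gcd_ne_zero_left (by omega))
    have hq1pos' : 1 ≤ q1 := by
      rcases Nat.eq_zero_or_pos q1 with h | h
      · rw [h] at hq01; simp at hq01; omega
      · exact h
    have hq0odd : Odd q0 := by
      rw [Nat.odd_iff]
      rcases Nat.even_or_odd q0 with h | h
      · exfalso
        have : (2 : ℕ) ∣ q := dvd_trans h.two_dvd hq0dvd
        rw [Nat.odd_iff] at hqodd
        omega
      · exact Nat.odd_iff.mp h
    have hq1odd : Odd q1 := by
      rw [Nat.odd_iff]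
      rcases Nat.even_or_odd q1 with h | h
      · exfalso
        have : (2 : ℕ) ∣ q := dvd_trans h.two_dvd ⟨q0, by rw [← hq01]; ring⟩
        rw [Nat.odd_iff] at hqodd
        omega
      · exact Nat.odd_iff.mp h
    have hcop1T : Nat.Coprime q1 T := aux_coprime_part q T (by omega) hT0
    haveI : NeZero q1 := ⟨by omega⟩
    set g : (ZMod q1)ˣ := ZMod.unitOfCoprime T hcop1T.symm with hg
    set D := orderOf (g ^ 2) with hD
    have hD1 : 1 ≤ D := orderOf_pos _
    have hq1dvdx : ∀ N : ℕ, D ∣ N → (q1 : ℤ) ∣ (t ^ 2) ^ N - 1 := by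
      intro N hDN
      have h1 : (g ^ 2) ^ N = 1 := orderOf_dvd_iff_pow_eq_one.mp hDN
      have h2 : (((T : ZMod q1)) ^ 2) ^ N = 1 := by
        have := congrArg (Units.coeHom (ZMod q1)) h1
        simpa [hg, ZMod.coe_unitOfCoprime] using this
      have hcast : ((t : ZMod q1)) ^ 2 = ((T : ZMod q1)) ^ 2 := by
        have h3 := congrArg (fun z : ℤ => (z : ZMod q1)) hTsq
        push_cast at h3
        exact h3.symm
      rw [← ZMod.intCast_zmod_eq_zero_iff_dvd]
      push_cast
      rw [hcast, h2]
      ring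
    set i0 := if q0 = 1 then 0 else (Nat.log 2 q0 + 2) / 2 with hi0
    have hq0x : (q0 : ℤ) ∣ (t ^ 2) ^ (i0 + c) := by
      rcases eq_or_ne q0 1 with h | h
      · rw [h]; exact one_dvd _
      · have hi0v : i0 = (Nat.log 2 q0 + 2) / 2 := if_neg h
        have hlog : q0 < 2 ^ (2 * i0) := by
          have h1 : q0 < 2 ^ (Nat.log 2 q0 + 1) := Nat.lt_pow_succ_log_self one_lt_two q0
          have h2 : Nat.log 2 q0 + 1 ≤ 2 * i0 := by rw [hi0v]; omega
          have h3 : 2 ^ (Nat.log 2 q0 + 1) ≤ 2 ^ (2 * i0) :=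
            Nat.pow_le_pow_right (by norm_num) h2
          omega
        have hdvdN : q0 ∣ T ^ (2 * i0) := aux_dvd_shrink (by omega) hT0 hq0T hlog
        have hdvdN2 : q0 ∣ T ^ (2 * (i0 + c)) :=
          hdvdN.trans (pow_dvd_pow T (by omega))
        have : (q0 : ℤ) ∣ ((T : ℤ)) ^ (2 * (i0 + c)) := by exact_mod_cast Int.natCast_dvd_natCast.mpr hdvdN2
        rw [pow_mul, hTsq] at this
        exact this
    have hi0bound : q0 ≠ 1 → 2 * i0 + 1 ≤ q0 := by
      intro h
      have hq03 : 3 ≤ q0 := by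
        rw [Nat.odd_iff] at hq0odd; omega
      have hi0v : i0 = (Nat.log 2 q0 + 2) / 2 := if_neg h
      set L := Nat.log 2 q0 with hL
      have hLq : L + 2 ≤ q0 := by
        rcases Nat.lt_or_ge L 2 with hL2 | hL2
        · omega
        · have h1 := aux_add_two_le_two_pow L hL2
          have h2 : 2 ^ L ≤ q0 := Nat.pow_log_le_self 2 (by omega)
          omega
      rw [Nat.odd_iff] at hq0odd
      omega
    have hDbound : q1 ≠ 1 → 2 * D + 1 ≤ q1 := by
      intro h
      have hq13 : 3 ≤ q1 := by rw [Nat.odd_iff] at hq1odd; omega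
      have := aux_order_sq_bound q1 hq13 g
      omega
    set d := 2 ^ f * D with hd
    have hd1 : 1 ≤ d := by
      have : 1 ≤ 2 ^ f := Nat.one_le_two_pow
      calc 1 = 1 * 1 := rfl
        _ ≤ 2 ^ f * D := Nat.mul_le_mul this hD1
    set j := i0 + d with hj
    -- the bound j ≤ 2 ^ (e - 1)
    have hmlt : 2 ^ f * (q0 * q1) + 1 ≤ 2 * 2 ^ (e - 1) := by
      rw [hq01, hfq]
      omega
    have hmlt' : (2:ℤ) ^ f * ((q0:ℤ) * (q1:ℤ)) + 1 ≤ 2 * 2 ^ (e - 1) := by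
      exact_mod_cast hmlt
    have hA1' : (1:ℤ) ≤ 2 ^ f := by exact_mod_cast Nat.one_le_two_pow (n:=f)
    have hjE : j ≤ 2 ^ (e - 1) := by
      have hsuff : ((j : ℕ) : ℤ) ≤ ((2 ^ (e - 1) : ℕ) : ℤ) → j ≤ 2 ^ (e - 1) := by
        intro h; exact_mod_cast h
      apply hsuff
      rw [hj, hd]
      push_cast
      rcases eq_or_ne q0 1 with h0 | h0 <;> rcases eq_or_ne q1 1 with h1 | h1
      · -- q0 = 1, q1 = 1 : D = 1
        have hDone : D = 1 := by
          have hgone : g ^ 2 = (1 : (ZMod q1)ˣ) := by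
            haveI : Subsingleton (ZMod q1)ˣ := by rw [h1]; infer_instance
            exact Subsingleton.elim _ _
          rw [hD, hgone, orderOf_one]
        have hi0z : i0 = 0 := if_pos h0
        have hAE : (2:ℤ) ^ f ≤ 2 ^ (e - 1) :=
          pow_le_pow_right₀ (by norm_num) hfe
        rw [hDone, hi0z]
        push_cast
        linarith
      · -- q0 = 1, q1 ≥ 3
        have hi0z : i0 = 0 := if_pos h0
        have hDb' : 2 * (D:ℤ) + 1 ≤ (q1:ℤ) := by exact_mod_cast hDbound h1
        have h0' : (q0:ℤ) = 1 := by exact_mod_cast h0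
        rw [hi0z]
        push_cast
        rw [h0', one_mul] at hmlt'
        have key : (2:ℤ) ^ f * (2 * D) ≤ 2 ^ f * ((q1:ℤ) - 1) :=
          mul_le_mul_of_nonneg_left (by linarith) (by positivity)
        have e1 : (2:ℤ)^f * (2*(D:ℤ)) = 2*((2:ℤ)^f*D) := by ring
        have e2 : (2:ℤ)^f * ((q1:ℤ)-1) = (2:ℤ)^f*(q1:ℤ) - 2^f := by ring
        linarith [key, hmlt', hA1', e1.ge, e1.le, e2.ge, e2.le]
      · -- q0 ≥ 3, q1 = 1 : D = 1
        have hDone : D = 1 := by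
          have hgone : g ^ 2 = (1 : (ZMod q1)ˣ) := by
            haveI : Subsingleton (ZMod q1)ˣ := by rw [h1]; infer_instance
            exact Subsingleton.elim _ _
          rw [hD, hgone, orderOf_one]
        have hi0b' : 2 * (i0:ℤ) + 1 ≤ (q0:ℤ) := by exact_mod_cast hi0bound h0
        have hq03 : 3 ≤ q0 := by rw [Nat.odd_iff] at hq0odd; omega
        have hq03' : (3:ℤ) ≤ (q0:ℤ) := by exact_mod_cast hq03
        have h1' : (q1:ℤ) = 1 := by exact_mod_cast h1
        rw [hDone]
        push_cast
        rw [h1', mul_one] at hmlt'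
        have hprod : (0:ℤ) ≤ ((2:ℤ)^f - 1) * ((q0:ℤ) - 2) :=
          mul_nonneg (by linarith) (by linarith)
        linarith [hmlt', hA1', hi0b', hq03', hprod]
      · -- q0 ≥ 3, q1 ≥ 3
        have hi0b' : 2 * (i0:ℤ) + 1 ≤ (q0:ℤ) := by exact_mod_cast hi0bound h0
        have hDb' : 2 * (D:ℤ) + 1 ≤ (q1:ℤ) := by exact_mod_cast hDbound h1
        have hq03 : 3 ≤ q0 := by rw [Nat.odd_iff] at hq0odd; omega
        have hq13 : 3 ≤ q1 := by rw [Nat.odd_iff] at hq1odd; omega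
        have hq03' : (3:ℤ) ≤ (q0:ℤ) := by exact_mod_cast hq03
        have hq13' : (3:ℤ) ≤ (q1:ℤ) := by exact_mod_cast hq13
        have key : (2:ℤ) ^ f * (2 * D) ≤ 2 ^ f * ((q1:ℤ) - 1) :=
          mul_le_mul_of_nonneg_left (by linarith) (by positivity)
        have hP1 : (0:ℤ) ≤ ((2:ℤ)^f - 1) * ((q1:ℤ) * ((q0:ℤ) - 1)) :=
          mul_nonneg (by linarith) (mul_nonneg (by linarith) (by linarith))
        have hP2 : (0:ℤ) ≤ ((q1:ℤ) - 3) * ((q0:ℤ) - 1) :=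
          mul_nonneg (by linarith) (by linarith)
        linarith [key, hmlt', hA1', hi0b', hq03', hq13', hP1, hP2]
    have hjn : j < n := lt_of_le_of_lt hjE hE
    have hij : i0 < j := by omega
    obtain ⟨u, hu, hxd, hform⟩ := aux_diff_formula t a b w hw hb2 ht2 c s hsdef i0 j hij
    have hji : j - i0 = d := by omega
    rw [hji] at hxd hform
    set v := d.factorization 2 with hv
    have hfv : f ≤ v := by
      have h2fd : (2:ℕ) ^ f ∣ d := ⟨D, hd⟩
      exact (Nat.Prime.pow_dvd_iff_le_factorization Nat.prime_two (by omega)).mp h2fd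
    have hdvd2 : ((2:ℤ) ^ f) ∣ s j - s i0 := by
      rw [hform]
      exact (((pow_dvd_pow (2:ℤ) hfv).mul_right u).mul_left _)
    have hdvdq0 : ((q0:ℤ)) ∣ s j - s i0 := by
      rw [hform]
      exact ((hq0x.mul_left a).mul_right _)
    have hdvdq1 : ((q1:ℤ)) ∣ s j - s i0 := by
      have hDd : D ∣ d := ⟨2 ^ f, by rw [hd]; ring⟩
      have h1 : (q1:ℤ) ∣ (t ^ 2) ^ d - 1 := hq1dvdx d hDd
      have heq : (t ^ 2) ^ d - 1 = 2 ^ (b + v) * u := by rw [hxd]; ring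
      rw [heq] at h1
      have hcopn : Nat.Coprime (2 ^ (b + v)) q1 :=
        (Nat.coprime_two_left.mpr hq1odd).pow_left _
      have hcopz : IsCoprime ((2:ℤ) ^ (b + v)) ((q1:ℕ):ℤ) := by
        have h := Nat.isCoprime_iff_coprime.mpr hcopn
        push_cast at h
        exact h
      have h2 : (q1:ℤ) ∣ u := (hcopz.symm).dvd_of_dvd_mul_left h1
      rw [hform]
      exact ((h2.mul_left _).mul_left _)
    have hcop01n : Nat.Coprime q0 q1 :=
      (Nat.Coprime.coprime_dvd_right hq0T (hcop1T.pow_right (2 * q))).symm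
    have hcop01 : IsCoprime ((q0:ℕ):ℤ) ((q1:ℕ):ℤ) := Nat.isCoprime_iff_coprime.mpr hcop01n
    have hdvd01 : ((q0:ℤ) * (q1:ℤ)) ∣ s j - s i0 := hcop01.mul_dvd hdvdq0 hdvdq1
    have hcopfn : Nat.Coprime (2 ^ f) q := (Nat.coprime_two_left.mpr hqodd).pow_left _
    have hcopfz : IsCoprime ((2:ℤ) ^ f) ((q:ℕ):ℤ) := by
      have h := Nat.isCoprime_iff_coprime.mpr hcopfn
      push_cast at h
      exact h
    have hq01z : ((q0:ℤ) * (q1:ℤ)) = ((q:ℕ):ℤ) := by exact_mod_cast hq01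
    rw [hq01z] at hdvd01
    have hfinal : ((m:ℕ):ℤ) ∣ s j - s i0 := by
      have h : (((2 ^ f * q : ℕ)):ℤ) ∣ s j - s i0 := by
        push_cast
        exact hcopfz.mul_dvd hdvd2 hdvd01
      rw [hfq] at h
      exact h
    exact hsep i0 j (by omega) hjn (by omega) (Int.modEq_iff_dvd.mpr hfinal)
end
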